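/- arXiv:1411.5260 — 9 statements merged into one kernel-verified Lean document; each statement's English description precedes it below -/
import Mathlib

section
/- Fix an integer K ≥ 1 and boundary points π_1, …, π_K with 0 < π_1 < ⋯ < π_K < 1, and let p ∈ [0,1] satisfy p ≠ π_k for every k. Then the function h ↦ R_p(h) on {0,1,…,K} attains its minimum uniquely at h* = #{k ∈ {1,…,K} : π_k < p}; that is, R_p(h*) < R_p(h) for every h ∈ {0,…,K} with h ≠ h*. (This is the Bayes optimal rule for the generalized 0–1 loss: W*_π(x) = ω_k exactly when p(x) lies in the interval ω_k.) -/
/-- Conditional theoretical risk of the generalized 0-1 loss: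
`R_p(h) = (2/K) * ( p * Σ_{k=h+1}^{K} (1 - π_k) + (1-p) * Σ_{k=1}^{h} π_k )`. -/
noncomputable def condRisk (K : ℕ) (pp : ℕ → ℝ) (p : ℝ) (h : ℕ) : ℝ :=
  (2 / K) * (p * ∑ k ∈ Finset.Icc (h + 1) K, (1 - pp k)
    + (1 - p) * ∑ k ∈ Finset.Icc 1 h, pp k)

lemma condRisk_step (K : ℕ) (pp : ℕ → ℝ) (p : ℝ) (h : ℕ) (hhK : h < K) :
    condRisk K pp p (h + 1) - condRisk K pp p h
      = (2 / K) * (pp (h + 1) - p) := by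
  have h1 : Finset.Icc (h + 1) K = insert (h + 1) (Finset.Icc (h + 2) K) := by
    ext x; simp [Finset.mem_Icc, Finset.mem_insert]; omega
  have h2 : (h + 1 : ℕ) ∉ Finset.Icc (h + 2) K := by simp
  have h3 : ∑ k ∈ Finset.Icc (h + 1) K, (1 - pp k)
      = (1 - pp (h + 1)) + ∑ k ∈ Finset.Icc (h + 2) K, (1 - pp k) := by
    rw [h1, Finset.sum_insert h2]
  have h4 : ∑ k ∈ Finset.Icc 1 (h + 1), pp k
      = ∑ k ∈ Finset.Icc 1 h, pp k + pp (h + 1) := by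
    rw [Finset.sum_Icc_succ_top (by omega)]
  simp only [condRisk, h3, h4]
  ring

/-- The Bayes optimal rule for the generalized 0-1 loss: `h ↦ R_p(h)` on `{0,…,K}` attains its
minimum uniquely at `h* = #{k ∈ {1,…,K} : π_k < p}`. -/
theorem stmt_0 (K : ℕ) (hK : 1 ≤ K) (pp : ℕ → ℝ)
    (hp1 : 0 < pp 1) (hpK : pp K < 1)
    (hmono : ∀ k, 1 ≤ k → k < K → pp k < pp (k + 1))
    (p : ℝ) (hp0 : 0 ≤ p) (hple : p ≤ 1)
    (hne : ∀ k ∈ Finset.Icc 1 K, p ≠ pp k) :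
    ∀ h ≤ K, h ≠ ((Finset.Icc 1 K).filter fun k => pp k < p).card →
      condRisk K pp p (((Finset.Icc 1 K).filter fun k => pp k < p).card)
        < condRisk K pp p h := by
  set S := (Finset.Icc 1 K).filter fun k => pp k < p with hS
  set m := S.card with hm
  -- monotonicity (non-strict, over range)
  have mono : ∀ k, 1 ≤ k → k ≤ K → ∀ j, 1 ≤ j → j ≤ k → pp j ≤ pp k := by
    intro k
    induction k with
    | zero => omega
    | succ n ih =>
      intro _ hkK j hj hjk
      rcases Nat.lt_or_ge j (n + 1) with hlt | hge
      · have hn1 : 1 ≤ n := by omega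
        have := ih hn1 (by omega) j hj (by omega)
        have := hmono n hn1 (by omega)
        linarith
      · have : j = n + 1 := by omega
        simp [this]
  -- S is a down-closed subset of Icc 1 K, namely Icc 1 m
  have hSicc : S = Finset.Icc 1 m := by
    rcases Finset.eq_empty_or_nonempty S with he | hne'
    · simp [hm, he]
    · set M := S.max' hne' with hM
      have hMS : M ∈ S := S.max'_mem hne'
      have hMIcc : 1 ≤ M ∧ M ≤ K := by
        have := (Finset.mem_filter.mp hMS).1
        simpa [Finset.mem_Icc] using this
      have hMlt : pp M < p := (Finset.mem_filter.mp hMS).2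
      have hSeq : S = Finset.Icc 1 M := by
        ext j
        simp only [hS, Finset.mem_filter, Finset.mem_Icc]
        constructor
        · intro ⟨⟨h1, _⟩, _⟩
          exact ⟨h1, S.le_max' j (by simpa [hS, Finset.mem_filter, Finset.mem_Icc] using
            (by exact Finset.mem_filter.mpr ⟨Finset.mem_Icc.mpr ⟨h1, ‹_›⟩, ‹_›⟩ : j ∈ S))⟩
        · intro ⟨h1, h2⟩
          refine ⟨⟨h1, by omega⟩, ?_⟩
          exact lt_of_le_of_lt (mono M hMIcc.1 hMIcc.2 j h1 h2) hMlt
      have : m = M := by rw [hm, hSeq, Nat.card_Icc]; omega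
      rw [this, hSeq]
  have hmK : m ≤ K := by
    have : S ⊆ Finset.Icc 1 K := Finset.filter_subset _ _
    have := Finset.card_le_card this
    simpa [Nat.card_Icc] using this
  -- key characterization
  have hlt : ∀ k, 1 ≤ k → k ≤ m → pp k < p := by
    intro k h1 h2
    have : k ∈ S := by rw [hSicc]; exact Finset.mem_Icc.mpr ⟨h1, h2⟩
    exact (Finset.mem_filter.mp this).2
  have hgt : ∀ k, m < k → k ≤ K → p < pp k := by
    intro k h1 h2
    have hk1 : 1 ≤ k := by omega
    have : k ∉ S := by rw [hSicc]; simp [Finset.mem_Icc]; omega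
    have hnlt : ¬ pp k < p := fun hh => this (Finset.mem_filter.mpr
      ⟨Finset.mem_Icc.mpr ⟨hk1, h2⟩, hh⟩)
    have := hne k (Finset.mem_Icc.mpr ⟨hk1, h2⟩)
    rcases lt_trichotomy p (pp k) with h | h | h
    · exact h
    · exact absurd h this
    · exact absurd h hnlt
  have hKpos : (0:ℝ) < 2 / K := by
    have : (0:ℝ) < K := by exact_mod_cast hK
    positivity
  -- strictly decreasing below m
  have hdec : ∀ h, h < m → condRisk K pp p m < condRisk K pp p h := by
    intro h hh
    have : ∀ d, ∀ h, h + d = m → 1 ≤ d → condRisk K pp p m < condRisk K pp p h := by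
      intro d
      induction d with
      | zero => omega
      | succ n ih =>
        intro h he _
        have hstep : condRisk K pp p (h + 1) - condRisk K pp p h
            = (2 / K) * (pp (h + 1) - p) := condRisk_step K pp p h (by omega)
        have hlt' : pp (h + 1) < p := hlt (h + 1) (by omega) (by omega)
        have h5 : condRisk K pp p (h + 1) < condRisk K pp p h := by nlinarith
        rcases Nat.eq_or_lt_of_le (show 1 ≤ n + 1 from by omega) with h6 | h6
        · have : h + 1 = m := by omega
          rw [← this]; exact h5
        · exact lt_trans (ih (h + 1) (by omega) (by omega)) h5
    exact this (m - h) h (by omega) (by omega)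
  -- strictly increasing above m
  have hinc : ∀ h, m < h → h ≤ K → condRisk K pp p m < condRisk K pp p h := by
    intro h hh hhK
    have : ∀ d, ∀ h, m + d = h → 1 ≤ d → h ≤ K → condRisk K pp p m < condRisk K pp p h := by
      intro d
      induction d with
      | zero => omega
      | succ n ih =>
        intro h he _ hhK'
        have hstep : condRisk K pp p (m + n + 1) - condRisk K pp p (m + n)
            = (2 / K) * (pp (m + n + 1) - p) := condRisk_step K pp p (m + n) (by omega)
        have hgt' : p < pp (m + n + 1) := hgt (m + n + 1) (by omega) (by omega)
        have h5 : condRisk K pp p (m + n) < condRisk K pp p (m + n + 1) := by nlinarith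
        have heq : h = m + n + 1 := by omega
        rcases Nat.eq_zero_or_pos n with h6 | h6
        · subst heq; simp [h6] at h5 ⊢; simpa [h6] using h5
        · exact lt_trans (ih (m + n) (by omega) (by omega) (by omega)) (heq ▸ h5)
    exact this (h - m) h (by omega) (by omega) hhK
  intro h hhK hne'
  rcases Nat.lt_or_ge h m with hc | hc
  · exact hdec h hc
  · exact hinc h (by omega) hhK
end

section
/- Let φ⁺, φ⁻ : ℝ → ℝ be convex, let π ∈ (0,1) and δ ∈ ℝ. Assume φ⁺ is differentiable at δ and φ⁻ is differentiable at −δ, with φ⁺′(δ) < 0, φ⁻′(−δ) < 0, and φ⁻′(−δ)/(φ⁻′(−δ) + φ⁺′(δ)) = π. Then for every p ∈ [0,1]: if p > π, every global minimizer t* of Q_p over ℝ satisfies t* > δ; and if p < π, every global minimizer t* of Q_p over ℝ satisfies t* < δ. (Sufficiency direction of the consistency characterization: the surrogate-optimal margin value lies on the correct side of δ according to whether p exceeds π.) -/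
/-- Conditional surrogate risk `Q_p(t) = p·φ⁺(t) + (1−p)·φ⁻(−t)`. -/
noncomputable def condSurrRisk (φp φm : ℝ → ℝ) (p t : ℝ) : ℝ :=
  p * φp t + (1 - p) * φm (-t)

/-- If a convex function has negative derivative at `x`, every global minimizer is `> x`. -/
lemma min_gt_of_deriv_neg (f : ℝ → ℝ) (hf : ConvexOn ℝ Set.univ f)
    {q x : ℝ} (hd : HasDerivAt f q x) (hq : q < 0)
    (t : ℝ) (ht : ∀ u, f t ≤ f u) : x < t := by
  -- find a point u > x with f u < f x
  have hslope := hasDerivAt_iff_tendsto_slope.mp hd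
  have hev : ∀ᶠ u in nhdsWithin x {x}ᶜ, slope f x u < 0 :=
    hslope.eventually (Iio_mem_nhds hq)
  have hev' : ∀ᶠ u in nhdsWithin x (Set.Ioi x), slope f x u < 0 :=
    hev.filter_mono (nhdsWithin_mono x (fun u hu => ne_of_gt hu))
  obtain ⟨u, hu1, hu2⟩ := (hev'.and self_mem_nhdsWithin).exists
  have hux : x < u := hu2
  have hfu : f u < f x := by
    have := hu1
    rw [slope_def_field, div_neg_iff] at this
    rcases this with ⟨_, h⟩ | ⟨h1, h2⟩
    · linarith
    · nlinarith [sub_lt_sub_right (show f u < f x by nlinarith) 0]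
  by_contra hcon
  push_neg at hcon
  have hx_seg : x ∈ segment ℝ t u := by
    rw [segment_eq_Icc (le_trans hcon hux.le)]
    exact ⟨hcon, hux.le⟩
  have := hf.le_on_segment (Set.mem_univ t) (Set.mem_univ u) hx_seg
  have : f x ≤ f u := le_trans this (max_le (le_trans (ht u) le_rfl) le_rfl)
  linarith

/-- If a convex function has positive derivative at `x`, every global minimizer is `< x`. -/
lemma min_lt_of_deriv_pos (f : ℝ → ℝ) (hf : ConvexOn ℝ Set.univ f)
    {q x : ℝ} (hd : HasDerivAt f q x) (hq : 0 < q)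
    (t : ℝ) (ht : ∀ u, f t ≤ f u) : t < x := by
  have hslope := hasDerivAt_iff_tendsto_slope.mp hd
  have hev : ∀ᶠ u in nhdsWithin x {x}ᶜ, 0 < slope f x u :=
    hslope.eventually (Ioi_mem_nhds hq)
  have hev' : ∀ᶠ u in nhdsWithin x (Set.Iio x), 0 < slope f x u :=
    hev.filter_mono (nhdsWithin_mono x (fun u hu => ne_of_lt hu))
  obtain ⟨u, hu1, hu2⟩ := (hev'.and self_mem_nhdsWithin).exists
  have hux : u < x := hu2
  have hfu : f u < f x := by
    have := hu1
    rw [slope_def_field, div_pos_iff] at this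
    rcases this with ⟨_, h⟩ | ⟨h1, h2⟩
    · linarith
    · nlinarith
  by_contra hcon
  push_neg at hcon
  have hx_seg : x ∈ segment ℝ u t := by
    rw [segment_eq_Icc (le_trans hux.le hcon)]
    exact ⟨hux.le, hcon⟩
  have := hf.le_on_segment (Set.mem_univ u) (Set.mem_univ t) hx_seg
  have : f x ≤ f u := le_trans this (max_le le_rfl (le_trans (ht u) le_rfl))
  linarith

/-- Sufficiency direction of the consistency characterization: if convex surrogates `φ⁺, φ⁻`
satisfy the derivative conditions at `(π, δ)`, then for `p > π` every global minimizer of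
`Q_p` lies strictly to the right of `δ`, and for `p < π` strictly to the left. -/
theorem stmt_3 (φp φm : ℝ → ℝ)
    (hφp : ConvexOn ℝ Set.univ φp) (hφm : ConvexOn ℝ Set.univ φm)
    (π δ : ℝ) (hπ0 : 0 < π) (hπ1 : π < 1)
    (dp dm : ℝ) (hdp : HasDerivAt φp dp δ) (hdm : HasDerivAt φm dm (-δ))
    (hdp0 : dp < 0) (hdm0 : dm < 0) (hratio : dm / (dm + dp) = π)
    (p : ℝ) (hp0 : 0 ≤ p) (hp1 : p ≤ 1) :
    (π < p → ∀ t : ℝ,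
      (∀ u : ℝ, condSurrRisk φp φm p t ≤ condSurrRisk φp φm p u) → δ < t)
    ∧ (p < π → ∀ t : ℝ,
      (∀ u : ℝ, condSurrRisk φp φm p t ≤ condSurrRisk φp φm p u) → t < δ) := by
  have hsum : dm + dp < 0 := by linarith
  have hdm_eq : dm = π * (dm + dp) := by
    rw [div_eq_iff (ne_of_lt hsum)] at hratio
    linarith
  -- convexity of Q
  have hneg : ConvexOn ℝ Set.univ (fun s : ℝ => φm (-s)) := by
    refine ⟨convex_univ, fun x _ y _ a b ha hb hab => ?_⟩
    have h := hφm.2 (Set.mem_univ (-x)) (Set.mem_univ (-y)) ha hb hab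
    simp only [smul_eq_mul] at h ⊢
    have e : -(a * x + b * y) = a * (-x) + b * (-y) := by ring
    rw [e]; exact h
  have hQ : ConvexOn ℝ Set.univ (condSurrRisk φp φm p) := by
    have h1 := (hφp.smul hp0).add (hneg.smul (by linarith : (0:ℝ) ≤ 1 - p))
    refine ⟨convex_univ, fun x hx y hy a b ha hb hab => ?_⟩
    have := h1.2 hx hy ha hb hab
    simpa [condSurrRisk, smul_eq_mul, Pi.add_apply, mul_add, add_assoc,
      add_left_comm, add_comm] using this
  -- derivative of Q at δ
  have hQd : HasDerivAt (condSurrRisk φp φm p) (p * dp + (1 - p) * (dm * (-1))) δ := by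
    have h2 : HasDerivAt (fun s : ℝ => φm (-s)) (dm * (-1)) δ :=
      HasDerivAt.comp δ hdm (hasDerivAt_neg δ)
    exact (hdp.const_mul p).add (h2.const_mul (1 - p))
  constructor
  · intro hπp t ht
    have hq : p * dp + (1 - p) * (dm * (-1)) < 0 := by nlinarith
    exact min_gt_of_deriv_neg _ hQ hQd hq t ht
  · intro hpπ t ht
    have hq : 0 < p * dp + (1 - p) * (dm * (-1)) := by nlinarith
    exact min_lt_of_deriv_pos _ hQ hQd hq t ht
end

section
/- Suppose conditions (C1)–(C3) hold for the piecewise linear surrogates φ⁺, φ⁻. Then: (i) for each k ∈ {1,…,K}, the open interval (H_{k−1}, H_k) is nonempty, and for every x ∈ (H_{k−1}, H_k), φ⁺ is differentiable at x with φ⁺′(x) = B⁺_k < 0, φ⁻ is differentiable at −x with φ⁻′(−x) = B⁻_k < 0, and φ⁻′(−x)/(φ⁻′(−x) + φ⁺′(x)) = π_k; and (ii) (minimal consistency) for every x ∈ ℝ such that φ⁺ is differentiable at x with φ⁺′(x) < 0 and φ⁻ is differentiable at −x with φ⁻′(−x) < 0, the ratio φ⁻′(−x)/(φ⁻′(−x)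 + φ⁺′(x)) equals π_k for some k ∈ {1,…,K}. In particular, φ⁺, φ⁻ are consistent exactly for the boundaries π_1, …, π_K and for no other boundary value in (0,1). -/
/-- Piecewise linear surrogate `φ(z) = max{0, max_{1≤k≤K} (A_k + B_k·z)}`. -/
noncomputable def phiPL (K : ℕ) (A B : ℕ → ℝ) (z : ℝ) : ℝ :=
  (Finset.Icc 1 K).fold max 0 fun k => A k + B k * z

/-- Under conditions (C1)-(C3), the piecewise linear surrogates are minimally consistent:
(i) on each open interval `(H_{k−1}, H_k)` both losses are differentiable with negative
slopes whose ratio equals `π_k`; (ii) wherever both derivatives exist and are negative,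
the ratio `φ⁻′(−x)/(φ⁻′(−x) + φ⁺′(x))` equals `π_k` for some `k ∈ {1,…,K}`. -/
theorem stmt_4 (K : ℕ) (hK : 1 ≤ K) (pp : ℕ → ℝ)
    (hpp0 : 0 < pp 1) (hppK : pp K < 1)
    (hppmono : ∀ k, 1 ≤ k → k < K → pp k < pp (k + 1))
    (Ap Bp Am Bm : ℕ → ℝ) (H Hm : ℕ → ℝ)
    -- hinge points
    (hH0 : H 0 = Am 1 / Bm 1)
    (hHmid : ∀ k, 1 ≤ k → k ≤ K - 1 → H k = (Ap k - Ap (k + 1)) / (Bp (k + 1) - Bp k))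
    (hHK : H K = -Ap K / Bp K)
    (hHm : ∀ k, 1 ≤ k → k ≤ K - 1 → Hm k = (Am k - Am (k + 1)) / (Bm (k + 1) - Bm k))
    -- (C1)
    (hC1p : ∀ k, 1 ≤ k → k < K → Bp k < Bp (k + 1)) (hC1pK : Bp K < 0)
    (hC1m : ∀ k, 1 ≤ k → k < K → Bm (k + 1) < Bm k) (hC1m1 : Bm 1 < 0)
    -- (C2)
    (hC2a : ∀ k, 1 ≤ k → k ≤ K - 1 → -Hm k = H k)
    (hC2b : ∀ k, k < K → H k < H (k + 1))
    -- (C3)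
    (hC3 : ∀ k ∈ Finset.Icc 1 K, Bm k / (Bm k + Bp k) = pp k) :
    (∀ k ∈ Finset.Icc 1 K,
      H (k - 1) < H k ∧
      ∀ x ∈ Set.Ioo (H (k - 1)) (H k),
        HasDerivAt (phiPL K Ap Bp) (Bp k) x ∧ Bp k < 0 ∧
        HasDerivAt (phiPL K Am Bm) (Bm k) (-x) ∧ Bm k < 0 ∧
        Bm k / (Bm k + Bp k) = pp k)
    ∧ (∀ (x dp dm : ℝ),
        HasDerivAt (phiPL K Ap Bp) dp x → dp < 0 →
        HasDerivAt (phiPL K Am Bm) dm (-x) → dm < 0 →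
        ∃ k ∈ Finset.Icc 1 K, dm / (dm + dp) = pp k) := by
  -- monotonicity of slopes
  have hBpmono : ∀ j k, 1 ≤ j → j ≤ k → k ≤ K → Bp j ≤ Bp k := by
    intro j k h1 hjk
    induction k, hjk using Nat.le_induction with
    | base => intro _; exact le_rfl
    | succ n hn ih =>
      intro hnK
      exact le_trans (ih (by omega)) (le_of_lt (hC1p n (le_trans h1 hn) (by omega)))
  have hBmanti : ∀ j k, 1 ≤ j → j ≤ k → k ≤ K → Bm k ≤ Bm j := by
    intro j k h1 hjk
    induction k, hjk using Nat.le_induction with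
    | base => intro _; exact le_rfl
    | succ n hn ih =>
      intro hnK
      exact le_trans (le_of_lt (hC1m n (le_trans h1 hn) (by omega))) (ih (by omega))
  have hBpneg : ∀ k, 1 ≤ k → k ≤ K → Bp k < 0 := fun k h1 hk =>
    lt_of_le_of_lt (hBpmono k K h1 hk le_rfl) hC1pK
  have hBmneg : ∀ k, 1 ≤ k → k ≤ K → Bm k < 0 := fun k h1 hk =>
    lt_of_le_of_lt (hBmanti 1 k le_rfl h1 hk) hC1m1
  -- monotonicity of hinge points
  have hHmono : ∀ j k, j ≤ k → k ≤ K → H j ≤ H k := by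
    intro j k hjk
    induction k, hjk using Nat.le_induction with
    | base => intro _; exact le_rfl
    | succ n hn ih =>
      intro hnK
      exact le_trans (ih (by omega)) (le_of_lt (hC2b n (by omega)))
  -- step identities
  have hstepP : ∀ j, 1 ≤ j → j < K → ∀ z,
      (Ap (j+1) + Bp (j+1) * z) - (Ap j + Bp j * z) = (Bp (j+1) - Bp j) * (z - H j) := by
    intro j h1 hj z
    have hb : Bp j < Bp (j+1) := hC1p j h1 hj
    have hne : Bp (j+1) - Bp j ≠ 0 := by intro h; rw [sub_eq_zero] at h; linarith
    rw [hHmid j h1 (by omega)]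
    field_simp
    ring
  have hstepM : ∀ j, 1 ≤ j → j < K → ∀ z,
      (Am (j+1) + Bm (j+1) * z) - (Am j + Bm j * z) = (Bm (j+1) - Bm j) * (z + H j) := by
    intro j h1 hj z
    have hb : Bm (j+1) < Bm j := hC1m j h1 hj
    have hne : Bm (j+1) - Bm j ≠ 0 := by intro h; rw [sub_eq_zero] at h; linarith
    have hHj : H j = -Hm j := (hC2a j h1 (by omega)).symm
    rw [hHj, hHm j h1 (by omega)]
    field_simp
    ring
  -- chain comparisons for φ⁺
  have hup : ∀ (z : ℝ) j k, 1 ≤ j → j ≤ k → k ≤ K → H (k-1) ≤ z →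
      Ap j + Bp j * z ≤ Ap k + Bp k * z := by
    intro z j k h1 hjk
    induction k, hjk using Nat.le_induction with
    | base => intro _ _; exact le_rfl
    | succ n hn ih =>
      intro hnK hz
      have hn1 : 1 ≤ n := le_trans h1 hn
      have hzn : H n ≤ z := by simpa using hz
      have h1' : Ap j + Bp j * z ≤ Ap n + Bp n * z :=
        ih (by omega) (le_trans (hHmono (n-1) n (by omega) (by omega)) hzn)
      have hstep := hstepP n hn1 (by omega) z
      have hb := hC1p n hn1 (by omega)
      nlinarith [mul_nonneg (by linarith : (0:ℝ) ≤ Bp (n+1) - Bp n) (by linarith : (0:ℝ) ≤ z - H n)]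
  have hdown : ∀ (z : ℝ) k j, 1 ≤ k → k ≤ j → j ≤ K → z ≤ H k →
      Ap j + Bp j * z ≤ Ap k + Bp k * z := by
    intro z k j h1 hkj
    induction j, hkj using Nat.le_induction with
    | base => intro _ _; exact le_rfl
    | succ n hn ih =>
      intro hnK hz
      have hn1 : 1 ≤ n := le_trans h1 hn
      have h1' : Ap n + Bp n * z ≤ Ap k + Bp k * z := ih (by omega) hz
      have hzn : z ≤ H n := le_trans hz (hHmono k n hn (by omega))
      have hstep := hstepP n hn1 (by omega) z
      have hb := hC1p n hn1 (by omega)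
      nlinarith [mul_nonneg (by linarith : (0:ℝ) ≤ Bp (n+1) - Bp n) (by linarith : (0:ℝ) ≤ H n - z)]
  -- chain comparisons for φ⁻
  have hupM : ∀ (z : ℝ) j k, 1 ≤ j → j ≤ k → k ≤ K → z ≤ -H (k-1) →
      Am j + Bm j * z ≤ Am k + Bm k * z := by
    intro z j k h1 hjk
    induction k, hjk using Nat.le_induction with
    | base => intro _ _; exact le_rfl
    | succ n hn ih =>
      intro hnK hz
      have hn1 : 1 ≤ n := le_trans h1 hn
      have hzn : z ≤ -H n := by simpa using hz
      have h1' : Am j + Bm j * z ≤ Am n + Bm n * z := by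
        refine ih (by omega) ?_
        have := hHmono (n-1) n (by omega) (by omega)
        linarith
      have hstep := hstepM n hn1 (by omega) z
      have hb := hC1m n hn1 (by omega)
      nlinarith [mul_nonneg (by linarith : (0:ℝ) ≤ Bm n - Bm (n+1)) (by linarith : (0:ℝ) ≤ -(z + H n))]
  have hdownM : ∀ (z : ℝ) k j, 1 ≤ k → k ≤ j → j ≤ K → -H k ≤ z →
      Am j + Bm j * z ≤ Am k + Bm k * z := by
    intro z k j h1 hkj
    induction j, hkj using Nat.le_induction with
    | base => intro _ _; exact le_rfl
    | succ n hn ih =>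
      intro hnK hz
      have hn1 : 1 ≤ n := le_trans h1 hn
      have h1' : Am n + Bm n * z ≤ Am k + Bm k * z := ih (by omega) hz
      have hzn : -H n ≤ z := by
        have := hHmono k n hn (by omega)
        linarith
      have hstep := hstepM n hn1 (by omega) z
      have hb := hC1m n hn1 (by omega)
      nlinarith [mul_nonneg (by linarith : (0:ℝ) ≤ Bm n - Bm (n+1)) (by linarith : (0:ℝ) ≤ z + H n)]
  -- fold lemmas
  have hfold_eq : ∀ (A B : ℕ → ℝ) (z : ℝ) (k : ℕ), k ∈ Finset.Icc 1 K →
      0 ≤ A k + B k * z → (∀ j ∈ Finset.Icc 1 K, A j + B j * z ≤ A k + B k * z) →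
      phiPL K A B z = A k + B k * z := by
    intro A B z k hk h0 hmax
    unfold phiPL
    refine le_antisymm ((Finset.fold_max_le _).mpr ⟨h0, hmax⟩) ?_
    exact (Finset.le_fold_max _).mpr (Or.inr ⟨k, hk, le_rfl⟩)
  have hfold_zero : ∀ (A B : ℕ → ℝ) (z : ℝ),
      (∀ j ∈ Finset.Icc 1 K, A j + B j * z ≤ 0) → phiPL K A B z = 0 := by
    intro A B z h
    unfold phiPL
    exact le_antisymm ((Finset.fold_max_le _).mpr ⟨le_rfl, h⟩) ((Finset.le_fold_max _).mpr (Or.inl le_rfl))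
  -- factored forms of the extreme lines
  have hBKne : Bp K ≠ 0 := ne_of_lt hC1pK
  have hBm1ne : Bm 1 ≠ 0 := ne_of_lt hC1m1
  have hLK : ∀ z : ℝ, Ap K + Bp K * z = Bp K * (z - H K) := by
    intro z; rw [hHK]; field_simp; ring
  have hM1 : ∀ z : ℝ, Am 1 + Bm 1 * z = Bm 1 * (z + H 0) := by
    intro z; rw [hH0]; field_simp; ring
  -- envelope identities
  have hPhiP : ∀ k, 1 ≤ k → k ≤ K → ∀ z : ℝ, H (k-1) ≤ z → z ≤ H k →
      phiPL K Ap Bp z = Ap k + Bp k * z := by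
    intro k h1 hK' z hz1 hz2
    refine hfold_eq Ap Bp z k (Finset.mem_Icc.mpr ⟨h1, hK'⟩) ?_ ?_
    · have h1' : Ap K + Bp K * z ≤ Ap k + Bp k * z := hdown z k K h1 hK' le_rfl hz2
      have hzK : z ≤ H K := le_trans hz2 (hHmono k K hK' le_rfl)
      have h2' : 0 ≤ Ap K + Bp K * z := by
        rw [hLK z]
        nlinarith [mul_nonneg (show (0:ℝ) ≤ -Bp K by linarith) (show (0:ℝ) ≤ H K - z by linarith)]
      linarith
    · intro j hj
      rcases Finset.mem_Icc.mp hj with ⟨hj1, hjK⟩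
      rcases le_total j k with h | h
      · exact hup z j k hj1 h hK' hz1
      · exact hdown z k j h1 h hjK hz2
  have hPhiM : ∀ k, 1 ≤ k → k ≤ K → ∀ z : ℝ, -H k ≤ z → z ≤ -H (k-1) →
      phiPL K Am Bm z = Am k + Bm k * z := by
    intro k h1 hK' z hz1 hz2
    refine hfold_eq Am Bm z k (Finset.mem_Icc.mpr ⟨h1, hK'⟩) ?_ ?_
    · have h1' : Am 1 + Bm 1 * z ≤ Am k + Bm k * z := hupM z 1 k le_rfl h1 hK' hz2
      have hz0 : z ≤ -H 0 := by
        have := hHmono 0 (k-1) (by omega) (by omega)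
        linarith
      have h2' : 0 ≤ Am 1 + Bm 1 * z := by
        rw [hM1 z]
        nlinarith [mul_nonneg (show (0:ℝ) ≤ -Bm 1 by linarith) (show (0:ℝ) ≤ -H 0 - z by linarith)]
      linarith
    · intro j hj
      rcases Finset.mem_Icc.mp hj with ⟨hj1, hjK⟩
      rcases le_total j k with h | h
      · exact hupM z j k hj1 h hK' hz2
      · exact hdownM z k j h1 h hjK hz1
  -- zero regions
  have hZeroP : ∀ z : ℝ, H K ≤ z → phiPL K Ap Bp z = 0 := by
    intro z hz
    refine hfold_zero Ap Bp z ?_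
    intro j hj
    rcases Finset.mem_Icc.mp hj with ⟨hj1, hjK⟩
    have h1' : Ap j + Bp j * z ≤ Ap K + Bp K * z :=
      hup z j K hj1 hjK le_rfl (le_trans (hHmono (K-1) K (by omega) le_rfl) hz)
    have h2' : Ap K + Bp K * z ≤ 0 := by
      rw [hLK z]
      exact mul_nonpos_of_nonpos_of_nonneg (le_of_lt hC1pK) (by linarith)
    linarith
  have hZeroM : ∀ z : ℝ, -H 0 ≤ z → phiPL K Am Bm z = 0 := by
    intro z hz
    refine hfold_zero Am Bm z ?_
    intro j hj
    rcases Finset.mem_Icc.mp hj with ⟨hj1, hjK⟩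
    have h01 : H 0 ≤ H 1 := hHmono 0 1 (by omega) hK
    have h1' : Am j + Bm j * z ≤ Am 1 + Bm 1 * z :=
      hdownM z 1 j le_rfl hj1 hjK (by linarith)
    have h2' : Am 1 + Bm 1 * z ≤ 0 := by
      rw [hM1 z]
      exact mul_nonpos_of_nonpos_of_nonneg (le_of_lt hC1m1) (by linarith)
    linarith
  -- derivative of a linear function
  have hlin : ∀ (a b x : ℝ), HasDerivAt (fun z => a + b * z) b x := by
    intro a b x
    simpa using ((hasDerivAt_id x).const_mul b).const_add a
  -- part (i)
  have parti : ∀ k ∈ Finset.Icc 1 K,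
      H (k - 1) < H k ∧
      ∀ x ∈ Set.Ioo (H (k - 1)) (H k),
        HasDerivAt (phiPL K Ap Bp) (Bp k) x ∧ Bp k < 0 ∧
        HasDerivAt (phiPL K Am Bm) (Bm k) (-x) ∧ Bm k < 0 ∧
        Bm k / (Bm k + Bp k) = pp k := by
    intro k hk
    rcases Finset.mem_Icc.mp hk with ⟨h1, hK'⟩
    have hHlt : H (k-1) < H k := by
      have := hC2b (k-1) (by omega)
      rwa [Nat.sub_add_cancel h1] at this
    refine ⟨hHlt, ?_⟩
    intro x hx
    have hdP : HasDerivAt (phiPL K Ap Bp) (Bp k) x := by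
      have heq : phiPL K Ap Bp =ᶠ[nhds x] fun z => Ap k + Bp k * z :=
        Filter.eventuallyEq_of_mem (Ioo_mem_nhds hx.1 hx.2)
          (fun y hy => hPhiP k h1 hK' y (le_of_lt hy.1) (le_of_lt hy.2))
      exact (hlin (Ap k) (Bp k) x).congr_of_eventuallyEq heq
    have hdM : HasDerivAt (phiPL K Am Bm) (Bm k) (-x) := by
      have hmem : Set.Ioo (-H k) (-H (k-1)) ∈ nhds (-x) :=
        Ioo_mem_nhds (by linarith [hx.2]) (by linarith [hx.1])
      have heq : phiPL K Am Bm =ᶠ[nhds (-x)] fun z => Am k + Bm k * z :=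
        Filter.eventuallyEq_of_mem hmem
          (fun y hy => hPhiM k h1 hK' y (le_of_lt hy.1) (le_of_lt hy.2))
      exact (hlin (Am k) (Bm k) (-x)).congr_of_eventuallyEq heq
    exact ⟨hdP, hBpneg k h1 hK', hdM, hBmneg k h1 hK', hC3 k hk⟩
  refine ⟨parti, ?_⟩
  -- part (ii)
  intro x dp dm hdp hdpneg hdm hdmneg
  have hxK : x < H K := by
    by_contra h
    push_neg at h
    have h1 : HasDerivWithinAt (phiPL K Ap Bp) dp (Set.Ici x) x := hdp.hasDerivWithinAt
    have h2 : HasDerivWithinAt (phiPL K Ap Bp) (0:ℝ) (Set.Ici x) x :=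
      ((hasDerivAt_const x (0:ℝ)).hasDerivWithinAt).congr
        (fun y hy => hZeroP y (le_trans h hy)) (hZeroP x h)
    have := (uniqueDiffOn_Ici x x Set.self_mem_Ici).eq_deriv _ h1 h2
    linarith
  have hx0 : H 0 < x := by
    by_contra h
    push_neg at h
    have h' : -H 0 ≤ -x := by linarith
    have h1 : HasDerivWithinAt (phiPL K Am Bm) dm (Set.Ici (-x)) (-x) := hdm.hasDerivWithinAt
    have h2 : HasDerivWithinAt (phiPL K Am Bm) (0:ℝ) (Set.Ici (-x)) (-x) :=
      ((hasDerivAt_const (-x) (0:ℝ)).hasDerivWithinAt).congr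
        (fun y hy => hZeroM y (le_trans h' hy)) (hZeroM (-x) h')
    have := (uniqueDiffOn_Ici (-x) (-x) Set.self_mem_Ici).eq_deriv _ h1 h2
    linarith
  have hloc : ∀ k, 1 ≤ k → k ≤ K → x < H k →
      (∃ j, 1 ≤ j ∧ j ≤ K ∧ H (j-1) < x ∧ x < H j) ∨ (∃ j, 1 ≤ j ∧ j < K ∧ x = H j) := by
    intro k h1
    induction k, h1 using Nat.le_induction with
    | base => intro _ hx1; exact Or.inl ⟨1, le_rfl, hK, by simpa using hx0, hx1⟩
    | succ n hn ih =>
      intro hnK hxn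
      rcases lt_trichotomy x (H n) with h | h | h
      · exact ih (by omega) h
      · exact Or.inr ⟨n, hn, by omega, h⟩
      · exact Or.inl ⟨n+1, by omega, hnK, by simpa using h, hxn⟩
  rcases hloc K hK le_rfl hxK with ⟨j, hj1, hjK, hxl, hxr⟩ | ⟨j, hj1, hjK, hxeq⟩
  · have hmem : j ∈ Finset.Icc 1 K := Finset.mem_Icc.mpr ⟨hj1, hjK⟩
    obtain ⟨_, hall⟩ := parti j hmem
    obtain ⟨hdP, _, hdM, _, hratio⟩ := hall x ⟨hxl, hxr⟩
    have e1 : dp = Bp j := hdp.unique hdP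
    have e2 : dm = Bm j := hdm.unique hdM
    exact ⟨j, hmem, by rw [e1, e2]; exact hratio⟩
  · exfalso
    have hjK' : j ≤ K := le_of_lt hjK
    have hjl : H (j-1) < x := by
      have := hC2b (j-1) (by omega)
      rw [Nat.sub_add_cancel hj1] at this
      rw [hxeq]; exact this
    have hjr : x < H (j+1) := by rw [hxeq]; exact hC2b j hjK
    -- left derivative
    have e1 : HasDerivWithinAt (phiPL K Ap Bp) (Bp j) (Set.Icc (H (j-1)) x) x :=
      ((hlin (Ap j) (Bp j) x).hasDerivWithinAt).congr
        (fun y hy => hPhiP j hj1 hjK' y hy.1 (hy.2.trans (le_of_eq hxeq)))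
        (hPhiP j hj1 hjK' x (le_of_lt hjl) (le_of_eq hxeq))
    have u1 : UniqueDiffWithinAt ℝ (Set.Icc (H (j-1)) x) x :=
      uniqueDiffOn_Icc hjl x (Set.right_mem_Icc.mpr (le_of_lt hjl))
    have d1 : dp = Bp j := u1.eq_deriv _ hdp.hasDerivWithinAt e1
    -- right derivative
    have hx' : H (j+1-1) = x := by simpa using hxeq.symm
    have e2 : HasDerivWithinAt (phiPL K Ap Bp) (Bp (j+1)) (Set.Icc x (H (j+1))) x :=
      ((hlin (Ap (j+1)) (Bp (j+1)) x).hasDerivWithinAt).congr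
        (fun y hy => hPhiP (j+1) (by omega) (by omega) y (le_trans hx'.le hy.1) hy.2)
        (hPhiP (j+1) (by omega) (by omega) x hx'.le (le_of_lt hjr))
    have u2 : UniqueDiffWithinAt ℝ (Set.Icc x (H (j+1))) x :=
      uniqueDiffOn_Icc hjr x (Set.left_mem_Icc.mpr (le_of_lt hjr))
    have d2 : dp = Bp (j+1) := u2.eq_deriv _ hdp.hasDerivWithinAt e2
    have := hC1p j hj1 hjK
    linarith
end

section
/- Fix an integer K ≥ 1 and 0 < π_1 < ⋯ < π_K < 1. For every p ∈ [0,1] and every h ∈ {0,…,K}, with h* = #{k ∈ {1,…,K} : π_k < p}, the excess conditional risk of the generalized 0–1 loss satisfies the exact identity R_p(h) − R_p(h*) = (2/K)·Σ_{k ∈ S} |p − π_k|, where S = {k : min(h,h*) < k ≤ max(h,h*)} (so S = ∅ and the excess risk is 0 when h = h*). -/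
/-- Exact excess-risk identity for the generalized 0-1 loss: with
`h* = #{k ∈ {1,…,K} : π_k < p}`, for every `h ∈ {0,…,K}`,
`R_p(h) − R_p(h*) = (2/K)·Σ_{k ∈ S} |p − π_k|` where `S = (min(h,h*), max(h,h*)]`. -/
theorem stmt_7 (K : ℕ) (hK : 1 ≤ K) (pp : ℕ → ℝ)
    (hp1 : 0 < pp 1) (hpK : pp K < 1)
    (hmono : ∀ k, 1 ≤ k → k < K → pp k < pp (k + 1))
    (p : ℝ) (hp0 : 0 ≤ p) (hple : p ≤ 1)
    (h : ℕ) (hhK : h ≤ K) :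
    condRisk K pp p h
        - condRisk K pp p (((Finset.Icc 1 K).filter fun k => pp k < p).card)
      = (2 / K) * ∑ k ∈ Finset.Ioc
          (min h (((Finset.Icc 1 K).filter fun k => pp k < p).card))
          (max h (((Finset.Icc 1 K).filter fun k => pp k < p).card)), |p - pp k| := by
  have hmono' : ∀ j i, 1 ≤ i → i ≤ j → j ≤ K → pp i ≤ pp j := by
    intro j
    induction j with
    | zero => intro i h1 hij _; omega
    | succ n ih =>
      intro i h1 hij hK'
      rcases Nat.eq_or_lt_of_le hij with he | hlt
      · rw [he]
      · calc pp i ≤ pp n := ih i h1 (by omega) (by omega)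
          _ ≤ pp (n+1) := (hmono n (by omega) (by omega)).le
  set F := (Finset.Icc 1 K).filter fun k => pp k < p with hF
  set m := F.card with hm
  have hFsub : F ⊆ Finset.Icc 1 K := Finset.filter_subset _ _
  have hmK : m ≤ K := by
    have := Finset.card_le_card hFsub
    simpa [Nat.card_Icc] using this
  have hFeq : F = Finset.Icc 1 m := by
    apply Finset.eq_of_subset_of_card_le
    · intro k hk
      have hk' : k ∈ Finset.Icc 1 K := hFsub hk
      rw [Finset.mem_Icc] at hk'
      have hsub : Finset.Icc 1 k ⊆ F := by
        intro j hj
        rw [Finset.mem_Icc] at hj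
        have hkp : pp k < p := (Finset.mem_filter.1 hk).2
        refine Finset.mem_filter.2 ⟨Finset.mem_Icc.2 ⟨hj.1, le_trans hj.2 hk'.2⟩, ?_⟩
        exact lt_of_le_of_lt (hmono' k j hj.1 hj.2 hk'.2) hkp
      have hcard : k ≤ m := by
        have := Finset.card_le_card hsub
        simpa [Nat.card_Icc] using this
      exact Finset.mem_Icc.2 ⟨hk'.1, hcard⟩
    · simp [Nat.card_Icc, hm]
  have hiff : ∀ k, 1 ≤ k → k ≤ K → (pp k < p ↔ k ≤ m) := by
    intro k h1 h2
    constructor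
    · intro hlt
      have : k ∈ F := Finset.mem_filter.2 ⟨Finset.mem_Icc.2 ⟨h1, h2⟩, hlt⟩
      rw [hFeq, Finset.mem_Icc] at this; exact this.2
    · intro hle
      have : k ∈ F := by rw [hFeq]; exact Finset.mem_Icc.2 ⟨h1, hle⟩
      exact (Finset.mem_filter.1 this).2
  have hIoc : ∀ a : ℕ, ∀ b : ℕ, Finset.Icc (a+1) b = Finset.Ioc a b := by
    intro a b; rw [Finset.Icc_add_one_left_eq_Ioc]
  have hIcc1 : ∀ b : ℕ, Finset.Icc 1 b = Finset.Ioc 0 b := hIoc 0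
  rcases le_total h m with hhm | hmh
  · -- h ≤ m : min = h, max = m
    rw [min_eq_left hhm, max_eq_right hhm]
    have hsplit1 : (∑ k ∈ Finset.Ioc h K, (1 - pp k))
        = (∑ k ∈ Finset.Ioc h m, (1 - pp k)) + ∑ k ∈ Finset.Ioc m K, (1 - pp k) :=
      (Finset.sum_Ioc_consecutive _ hhm hmK).symm
    have hsplit2 : (∑ k ∈ Finset.Ioc 0 m, pp k)
        = (∑ k ∈ Finset.Ioc 0 h, pp k) + ∑ k ∈ Finset.Ioc h m, pp k :=
      (Finset.sum_Ioc_consecutive _ (Nat.zero_le h) hhm).symm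
    have habs : ∀ k ∈ Finset.Ioc h m, |p - pp k| = p - pp k := by
      intro k hk
      rw [Finset.mem_Ioc] at hk
      have : pp k < p := (hiff k (by omega) (le_trans hk.2 hmK)).2 hk.2
      exact abs_of_pos (by linarith)
    rw [Finset.sum_congr rfl habs]
    have hsum : (∑ k ∈ Finset.Ioc h m, (p - pp k))
        = p * (∑ k ∈ Finset.Ioc h m, (1 - pp k)) - (1 - p) * ∑ k ∈ Finset.Ioc h m, pp k := by
      rw [Finset.mul_sum, Finset.mul_sum, ← Finset.sum_sub_distrib]
      exact Finset.sum_congr rfl fun k _ => by ring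
    simp only [condRisk, hIoc, hIcc1]
    rw [hsplit1, hsplit2, hsum]
    ring
  · -- m ≤ h
    rw [min_eq_right hmh, max_eq_left hmh]
    have hsplit1 : (∑ k ∈ Finset.Ioc m K, (1 - pp k))
        = (∑ k ∈ Finset.Ioc m h, (1 - pp k)) + ∑ k ∈ Finset.Ioc h K, (1 - pp k) :=
      (Finset.sum_Ioc_consecutive _ hmh hhK).symm
    have hsplit2 : (∑ k ∈ Finset.Ioc 0 h, pp k)
        = (∑ k ∈ Finset.Ioc 0 m, pp k) + ∑ k ∈ Finset.Ioc m h, pp k :=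
      (Finset.sum_Ioc_consecutive _ (Nat.zero_le m) hmh).symm
    have habs : ∀ k ∈ Finset.Ioc m h, |p - pp k| = pp k - p := by
      intro k hk
      rw [Finset.mem_Ioc] at hk
      have : ¬ pp k < p := fun hc => by
        have := (hiff k (by omega) (le_trans hk.2 hhK)).1 hc; omega
      rw [abs_sub_comm]
      exact abs_of_nonneg (by linarith [not_lt.1 this])
    rw [Finset.sum_congr rfl habs]
    have hsum : (∑ k ∈ Finset.Ioc m h, (pp k - p))
        = (1 - p) * (∑ k ∈ Finset.Ioc m h, pp k) - p * ∑ k ∈ Finset.Ioc m h, (1 - pp k) := by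
      rw [Finset.mul_sum, Finset.mul_sum, ← Finset.sum_sub_distrib]
      exact Finset.sum_congr rfl fun k _ => by ring
    simp only [condRisk, hIoc, hIcc1]
    rw [hsplit1, hsplit2, hsum]
    ring
end

section
/- Let φ⁺, φ⁻ : ℝ → ℝ be convex, let π ∈ (0,1) and δ ∈ ℝ, and assume φ⁺ is differentiable at δ and φ⁻ is differentiable at −δ with φ⁺′(δ) < 0, φ⁻′(−δ) < 0, and φ⁻′(−δ)/(φ⁻′(−δ) + φ⁺′(δ)) = π. Then for every p ∈ [0,1]: if p ≤ π, then Q_p(t) ≥ Q_p(δ) for every t ≥ δ; and symmetrically, if p ≥ π, then Q_p(t) ≥ Q_p(δ) for every t ≤ δ. (Monotone comparison lemma: moving past the consistent threshold in the wrong direction cannot decrease the conditional surrogate risk.) -/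
lemma tangent_le_of_convex {f : ℝ → ℝ} (hf : ConvexOn ℝ Set.univ f) {d x : ℝ}
    (hd : HasDerivAt f d x) (y : ℝ) : f x + d * (y - x) ≤ f y := by
  rcases lt_trichotomy x y with h | h | h
  · have := hf.le_slope_of_hasDerivAt (Set.mem_univ x) (Set.mem_univ y) h hd
    rw [slope_def_field] at this
    have h2 : d * (y - x) ≤ f y - f x := (le_div_iff₀ (by linarith)).mp this
    linarith
  · simp [h]
  · have hs := hf.slope_le_of_hasDerivAt (Set.mem_univ y) (Set.mem_univ x) h hd
    rw [slope_def_field] at hs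
    have h2 : f x - f y ≤ d * (x - y) := by
      have := (div_le_iff₀ (by linarith : (0:ℝ) < x - y)).mp hs
      linarith
    linarith

/-- Monotone comparison lemma: for convex surrogates satisfying the consistency conditions at
`(π, δ)`, if `p ≤ π` then `Q_p(t) ≥ Q_p(δ)` for every `t ≥ δ`, and if `p ≥ π` then
`Q_p(t) ≥ Q_p(δ)` for every `t ≤ δ`. -/
theorem stmt_8 (φp φm : ℝ → ℝ)
    (hφp : ConvexOn ℝ Set.univ φp) (hφm : ConvexOn ℝ Set.univ φm)
    (π δ : ℝ) (hπ0 : 0 < π) (hπ1 : π < 1)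
    (dp dm : ℝ) (hdp : HasDerivAt φp dp δ) (hdm : HasDerivAt φm dm (-δ))
    (hdp0 : dp < 0) (hdm0 : dm < 0) (hratio : dm / (dm + dp) = π)
    (p : ℝ) (hp0 : 0 ≤ p) (hp1 : p ≤ 1) :
    (p ≤ π → ∀ t : ℝ, δ ≤ t → condSurrRisk φp φm p δ ≤ condSurrRisk φp φm p t)
    ∧ (π ≤ p → ∀ t : ℝ, t ≤ δ → condSurrRisk φp φm p δ ≤ condSurrRisk φp φm p t) := by
  have hsum : dm + dp < 0 := by linarith
  have hdm' : dm = π * (dm + dp) := by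
    rw [div_eq_iff (ne_of_lt hsum)] at hratio; linarith
  constructor
  · intro hpπ t hδt
    have h1 := tangent_le_of_convex hφp hdp t
    have h2 := tangent_le_of_convex hφm hdm (-t)
    have hkey : 0 ≤ p * dp - (1 - p) * dm := by
      have : dm ≤ p * (dm + dp) := by
        calc dm = π * (dm + dp) := hdm'
        _ ≤ p * (dm + dp) := by nlinarith
      nlinarith
    have hmul : 0 ≤ (p * dp - (1 - p) * dm) * (t - δ) := by nlinarith
    unfold condSurrRisk
    nlinarith [mul_le_mul_of_nonneg_left h1 hp0,
      mul_le_mul_of_nonneg_left h2 (by linarith : (0:ℝ) ≤ 1 - p)]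
  · intro hπp t htδ
    have h1 := tangent_le_of_convex hφp hdp t
    have h2 := tangent_le_of_convex hφm hdm (-t)
    have hkey : p * dp - (1 - p) * dm ≤ 0 := by
      have : p * (dm + dp) ≤ dm := by
        calc p * (dm + dp) ≤ π * (dm + dp) := by nlinarith
        _ = dm := hdm'.symm
      nlinarith
    have hmul : 0 ≤ (p * dp - (1 - p) * dm) * (t - δ) := by nlinarith
    unfold condSurrRisk
    nlinarith [mul_le_mul_of_nonneg_left h1 hp0,
      mul_le_mul_of_nonneg_left h2 (by linarith : (0:ℝ) ≤ 1 - p)]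
end

section
/- In addition to the hypotheses of the excess risk bound (convex nonnegative surrogates φ⁺, φ⁻ satisfying the consistency conditions at each (π_k, δ_k), and constants C > 0, s ≥ 1 with |p(x) − π_k|^s ≤ C^s·(Q_{p(x)}(δ_k) − inf_{t∈ℝ} Q_{p(x)}(t)) for all x and k), assume the margin condition with constants A ≥ 1 and α > 0, and set β = α/(1+α). Then there exists a constant D > 0, depending only on C, s, A, and α, such that for every measurable f : 𝒳 → ℝ: ΔR(f) ≤ D·ΔQ(f)^{1/(s+β−βs)}. -/
open MeasureTheory ENNReal

/-- Excess theoretical risk `ΔR(f)` of the interval rule induced by thresholds `δ`. -/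
noncomputable def excessR {X : Type*} [MeasurableSpace X] (μ : Measure X)
    (K : ℕ) (pp : ℕ → ℝ) (p : X → ℝ) (δ : ℕ → ℝ) (f : X → ℝ) : ℝ≥0∞ :=
  ∫⁻ x, ENNReal.ofReal
    (condRisk K pp (p x) (((Finset.Icc 1 K).filter fun k => δ k < f x).card)
      - condRisk K pp (p x) (((Finset.Icc 1 K).filter fun k => pp k < p x).card)) ∂μ

/-- Excess surrogate risk `ΔQ(f)`. -/
noncomputable def excessQ {X : Type*} [MeasurableSpace X] (μ : Measure X)
    (φp φm : ℝ → ℝ) (p : X → ℝ) (f : X → ℝ) : ℝ≥0∞ :=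
  ∫⁻ x, ENNReal.ofReal
    (condSurrRisk φp φm (p x) (f x) - ⨅ t : ℝ, condSurrRisk φp φm (p x) t) ∂μ

lemma aux_downclosed (K : ℕ) (S : Finset ℕ) (hsub : S ⊆ Finset.Icc 1 K)
    (hdc : ∀ j k, 1 ≤ j → j ≤ k → k ∈ S → j ∈ S) : S = Finset.Icc 1 S.card := by
  rcases S.eq_empty_or_nonempty with rfl | hne
  · simp
  · set m := S.max' hne with hm
    have hSm : S = Finset.Icc 1 m := by
      apply Finset.Subset.antisymm
      · intro k hk
        have h1 : 1 ≤ k := (Finset.mem_Icc.mp (hsub hk)).1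
        exact Finset.mem_Icc.mpr ⟨h1, S.le_max' k hk⟩
      · intro j hj
        have hj' := Finset.mem_Icc.mp hj
        exact hdc j m hj'.1 hj'.2 (S.max'_mem hne)
    have hcard : S.card = m := by rw [hSm, Nat.card_Icc]; omega
    rw [hcard]; exact hSm

lemma aux_mono (K : ℕ) (g : ℕ → ℝ) (hg : ∀ k, 1 ≤ k → k < K → g k < g (k + 1)) :
    ∀ j k, 1 ≤ j → j ≤ k → k ≤ K → g j ≤ g k := by
  intro j k hj hjk hkK
  induction k with
  | zero => omega
  | succ n ih =>
    rcases Nat.lt_or_ge j (n+1) with h | h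
    · have hn : j ≤ n := by omega
      have h1 : g j ≤ g n := ih hn (by omega)
      have h2 : g n < g (n+1) := hg n (by omega) (by omega)
      linarith
    · have : j = n + 1 := by omega
      exact this ▸ le_rfl

lemma aux_riskdiff (K : ℕ) (pp : ℕ → ℝ) (p : ℝ) {h h' : ℕ} (hh' : h' ≤ h) (hhK : h ≤ K) :
    condRisk K pp p h - condRisk K pp p h'
      = (2 / K) * ∑ k ∈ Finset.Ioc h' h, (pp k - p) := by
  have e0 : ∀ m : ℕ, Finset.Icc (m + 1) K = Finset.Ioc m K := fun m => Finset.Icc_add_one_left_eq_Ioc m K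
  have e0' : ∀ m : ℕ, Finset.Icc 1 m = Finset.Ioc 0 m := fun m => Finset.Icc_add_one_left_eq_Ioc 0 m
  have e1 : (∑ k ∈ Finset.Ioc h' h, (1 - pp k)) + ∑ k ∈ Finset.Ioc h K, (1 - pp k)
      = ∑ k ∈ Finset.Ioc h' K, (1 - pp k) := Finset.sum_Ioc_consecutive _ hh' hhK
  have e2 : (∑ k ∈ Finset.Ioc 0 h', pp k) + ∑ k ∈ Finset.Ioc h' h, pp k
      = ∑ k ∈ Finset.Ioc 0 h, pp k := Finset.sum_Ioc_consecutive _ (Nat.zero_le _) hh'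
  have e3 : ∑ k ∈ Finset.Ioc h' h, (pp k - p)
      = (1 - p) * (∑ k ∈ Finset.Ioc h' h, pp k) - p * ∑ k ∈ Finset.Ioc h' h, (1 - pp k) := by
    rw [Finset.mul_sum, Finset.mul_sum, ← Finset.sum_sub_distrib]
    exact Finset.sum_congr rfl fun k _ => by ring
  unfold condRisk
  rw [e0, e0, e0', e0', e3, ← e1, ← e2]
  ring

lemma aux_struct (K : ℕ) (pp δ : ℕ → ℝ)
    (hppm : ∀ j k, 1 ≤ j → j ≤ k → k ≤ K → pp j ≤ pp k)
    (hδm : ∀ j k, 1 ≤ j → j ≤ k → k ≤ K → δ j ≤ δ k)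
    (pv fv : ℝ) :
    ∃ a b : ℕ, b ≤ K ∧
      (condRisk K pp pv (((Finset.Icc 1 K).filter fun k => δ k < fv).card)
        - condRisk K pp pv (((Finset.Icc 1 K).filter fun k => pp k < pv).card)
      = (2 / (K : ℝ)) * ∑ k ∈ Finset.Ioc a b, |pv - pp k|) ∧
      ∀ k ∈ Finset.Ioc a b, 1 ≤ k ∧ k ≤ K ∧
        ((pp k < pv ∧ fv ≤ δ k) ∨ (pv ≤ pp k ∧ δ k < fv)) := by
  set S := (Finset.Icc 1 K).filter fun k => δ k < fv with hSdef
  set T := (Finset.Icc 1 K).filter fun k => pp k < pv with hTdef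
  have hS : S = Finset.Icc 1 S.card := by
    apply aux_downclosed K S (Finset.filter_subset _ _)
    intro j k hj hjk hkS
    have hk := Finset.mem_filter.mp hkS
    have hkIcc := Finset.mem_Icc.mp hk.1
    refine Finset.mem_filter.mpr ⟨Finset.mem_Icc.mpr ⟨hj, le_trans hjk hkIcc.2⟩, ?_⟩
    exact lt_of_le_of_lt (hδm j k hj hjk hkIcc.2) hk.2
  have hT : T = Finset.Icc 1 T.card := by
    apply aux_downclosed K T (Finset.filter_subset _ _)
    intro j k hj hjk hkS
    have hk := Finset.mem_filter.mp hkS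
    have hkIcc := Finset.mem_Icc.mp hk.1
    refine Finset.mem_filter.mpr ⟨Finset.mem_Icc.mpr ⟨hj, le_trans hjk hkIcc.2⟩, ?_⟩
    exact lt_of_le_of_lt (hppm j k hj hjk hkIcc.2) hk.2
  have hScard : S.card ≤ K := by
    calc S.card ≤ (Finset.Icc 1 K).card := Finset.card_filter_le _ _
    _ = K := by rw [Nat.card_Icc]; omega
  have hTcard : T.card ≤ K := by
    calc T.card ≤ (Finset.Icc 1 K).card := Finset.card_filter_le _ _
    _ = K := by rw [Nat.card_Icc]; omega
  have hmemS : ∀ k, 1 ≤ k → k ≤ K → (k ∈ S ↔ δ k < fv) := by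
    intro k h1 h2
    simp [hSdef, Finset.mem_filter, Finset.mem_Icc, h1, h2]
  have hmemT : ∀ k, 1 ≤ k → k ≤ K → (k ∈ T ↔ pp k < pv) := by
    intro k h1 h2
    simp [hTdef, Finset.mem_filter, Finset.mem_Icc, h1, h2]
  rcases le_total T.card S.card with hle | hle
  · refine ⟨T.card, S.card, hScard, ?_, ?_⟩
    · rw [aux_riskdiff K pp pv hle hScard]
      congr 1
      apply Finset.sum_congr rfl
      intro k hk
      obtain ⟨hk1, hk2⟩ := Finset.mem_Ioc.mp hk
      have h1 : 1 ≤ k := by omega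
      have h2 : k ≤ K := le_trans hk2 hScard
      have hnotT : k ∉ T := by rw [hT]; simp [Finset.mem_Icc]; omega
      have hpk : pv ≤ pp k := le_of_not_gt (fun hc => hnotT ((hmemT k h1 h2).mpr hc))
      rw [abs_of_nonpos (by linarith)]; ring
    · intro k hk
      obtain ⟨hk1, hk2⟩ := Finset.mem_Ioc.mp hk
      have h1 : 1 ≤ k := by omega
      have h2 : k ≤ K := le_trans hk2 hScard
      have hkS : k ∈ S := by rw [hS]; exact Finset.mem_Icc.mpr ⟨h1, hk2⟩
      have hnotT : k ∉ T := by rw [hT]; simp [Finset.mem_Icc]; omega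
      have hpk : pv ≤ pp k := le_of_not_gt (fun hc => hnotT ((hmemT k h1 h2).mpr hc))
      exact ⟨h1, h2, Or.inr ⟨hpk, (hmemS k h1 h2).mp hkS⟩⟩
  · refine ⟨S.card, T.card, hTcard, ?_, ?_⟩
    · have hd := aux_riskdiff K pp pv hle hTcard
      have : condRisk K pp pv S.card - condRisk K pp pv T.card
          = (2 / (K : ℝ)) * ∑ k ∈ Finset.Ioc S.card T.card, (pv - pp k) := by
        have hneg : ∑ k ∈ Finset.Ioc S.card T.card, (pv - pp k)
            = -∑ k ∈ Finset.Ioc S.card T.card, (pp k - pv) := by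
          rw [← Finset.sum_neg_distrib]
          exact Finset.sum_congr rfl fun k _ => by ring
        rw [hneg]; linarith
      rw [this]
      congr 1
      apply Finset.sum_congr rfl
      intro k hk
      obtain ⟨hk1, hk2⟩ := Finset.mem_Ioc.mp hk
      have h1 : 1 ≤ k := by omega
      have h2 : k ≤ K := le_trans hk2 hTcard
      have hkT : k ∈ T := by rw [hT]; exact Finset.mem_Icc.mpr ⟨h1, hk2⟩
      have hpk : pp k < pv := (hmemT k h1 h2).mp hkT
      rw [abs_of_nonneg (by linarith)]
    · intro k hk
      obtain ⟨hk1, hk2⟩ := Finset.mem_Ioc.mp hk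
      have h1 : 1 ≤ k := by omega
      have h2 : k ≤ K := le_trans hk2 hTcard
      have hkT : k ∈ T := by rw [hT]; exact Finset.mem_Icc.mpr ⟨h1, hk2⟩
      have hnotS : k ∉ S := by rw [hS]; simp [Finset.mem_Icc]; omega
      have hfk : fv ≤ δ k := le_of_not_gt (fun hc => hnotS ((hmemS k h1 h2).mpr hc))
      exact ⟨h1, h2, Or.inl ⟨(hmemT k h1 h2).mp hkT, hfk⟩⟩

lemma aux_Qconv {φp φm : ℝ → ℝ} (hφpconv : ConvexOn ℝ Set.univ φp)
    (hφmconv : ConvexOn ℝ Set.univ φm) {pv : ℝ} (hpv0 : 0 ≤ pv) (hpv1 : pv ≤ 1) :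
    ConvexOn ℝ Set.univ (fun t => condSurrRisk φp φm pv t) := by
  refine ⟨convex_univ, ?_⟩
  intro x _ y _ a b ha hb hab
  have h1 := hφpconv.2 (Set.mem_univ x) (Set.mem_univ y) ha hb hab
  have h2 := hφmconv.2 (Set.mem_univ (-x)) (Set.mem_univ (-y)) ha hb hab
  simp only [smul_eq_mul, condSurrRisk] at h1 h2 ⊢
  have hneg : -(a * x + b * y) = a * (-x) + b * (-y) := by ring
  rw [hneg]
  have h1' := mul_le_mul_of_nonneg_left h1 hpv0
  have h2' := mul_le_mul_of_nonneg_left h2 (by linarith : (0:ℝ) ≤ 1 - pv)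
  nlinarith

lemma aux_tangent {Q : ℝ → ℝ} (hQ : ConvexOn ℝ Set.univ Q) {a g : ℝ}
    (hd : HasDerivAt Q g a) (t : ℝ) : Q a + g * (t - a) ≤ Q t := by
  rcases lt_trichotomy t a with h | h | h
  · have hs := hQ.slope_le_of_hasDerivAt (Set.mem_univ t) (Set.mem_univ a) h hd
    rw [slope_def_field] at hs
    have hpos : 0 < a - t := by linarith
    rw [div_le_iff₀ hpos] at hs
    nlinarith
  · subst h; simp
  · have hs := hQ.le_slope_of_hasDerivAt (Set.mem_univ a) (Set.mem_univ t) h hd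
    rw [slope_def_field] at hs
    have hpos : 0 < t - a := by linarith
    rw [le_div_iff₀ hpos] at hs
    nlinarith

lemma aux_Qcomp {φp φm : ℝ → ℝ} (hφpconv : ConvexOn ℝ Set.univ φp)
    (hφmconv : ConvexOn ℝ Set.univ φm) {pv : ℝ} (hpv0 : 0 ≤ pv) (hpv1 : pv ≤ 1)
    {δk dpk dmk πk : ℝ} (hdp : HasDerivAt φp dpk δk) (hdm : HasDerivAt φm dmk (-δk))
    (hdpneg : dpk < 0) (hdmneg : dmk < 0) (hπ : dmk / (dmk + dpk) = πk)
    {t : ℝ} (hcase : (πk < pv ∧ t ≤ δk) ∨ (pv ≤ πk ∧ δk < t)) :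
    condSurrRisk φp φm pv δk ≤ condSurrRisk φp φm pv t := by
  have hQconv := aux_Qconv hφpconv hφmconv hpv0 hpv1
  have hdm' : HasDerivAt (fun u : ℝ => φm (-u)) (dmk * (-1)) δk := by
    have := hdm.comp δk (hasDerivAt_neg δk)
    simpa [Function.comp_def] using this
  have hd : HasDerivAt (fun u => condSurrRisk φp φm pv u)
      (pv * dpk + (1 - pv) * (dmk * (-1))) δk := by
    have := ((hdp.const_mul pv).add (hdm'.const_mul (1 - pv)))
    simpa [condSurrRisk, Pi.add_def] using this
  have hne : dmk + dpk ≠ 0 := by linarith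
  have hdm_eq : dmk = πk * (dmk + dpk) := by
    field_simp at hπ; linarith [hπ]
  have hg : pv * dpk + (1 - pv) * (dmk * (-1)) = (dmk + dpk) * (pv - πk) := by
    linear_combination -hdm_eq
  have htan := aux_tangent hQconv hd t
  have hgn : 0 ≤ (pv * dpk + (1 - pv) * (dmk * (-1))) * (t - δk) := by
    rw [hg]
    rcases hcase with ⟨h1, h2⟩ | ⟨h1, h2⟩
    · have : (dmk + dpk) * (pv - πk) ≤ 0 :=
        mul_nonpos_of_nonpos_of_nonneg (by linarith) (by linarith)
      nlinarith
    · have : 0 ≤ (dmk + dpk) * (pv - πk) := by nlinarith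
      nlinarith
  linarith

lemma aux_Qnonneg {φp φm : ℝ → ℝ} (hφp0 : ∀ z, 0 ≤ φp z) (hφm0 : ∀ z, 0 ≤ φm z)
    {pv : ℝ} (hpv0 : 0 ≤ pv) (hpv1 : pv ≤ 1) (t : ℝ) : 0 ≤ condSurrRisk φp φm pv t := by
  unfold condSurrRisk
  have := hφp0 t; have := hφm0 (-t); nlinarith

lemma aux_iInf_rat {φp φm : ℝ → ℝ} (hφpc : Continuous φp) (hφmc : Continuous φm)
    (hφp0 : ∀ z, 0 ≤ φp z) (hφm0 : ∀ z, 0 ≤ φm z)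
    {pv : ℝ} (hpv0 : 0 ≤ pv) (hpv1 : pv ≤ 1) :
    (⨅ t : ℝ, condSurrRisk φp φm pv t) = ⨅ q : ℚ, condSurrRisk φp φm pv (q : ℝ) := by
  have hb : BddBelow (Set.range fun t : ℝ => condSurrRisk φp φm pv t) :=
    ⟨0, by rintro y ⟨t, rfl⟩; exact aux_Qnonneg hφp0 hφm0 hpv0 hpv1 t⟩
  have hbq : BddBelow (Set.range fun q : ℚ => condSurrRisk φp φm pv (q : ℝ)) :=
    ⟨0, by rintro y ⟨q, rfl⟩; exact aux_Qnonneg hφp0 hφm0 hpv0 hpv1 _⟩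
  have hQc : Continuous (fun t : ℝ => condSurrRisk φp φm pv t) := by
    unfold condSurrRisk
    exact (continuous_const.mul hφpc).add
      (continuous_const.mul (hφmc.comp continuous_neg))
  apply le_antisymm
  · exact le_ciInf fun q => ciInf_le hb (q : ℝ)
  · refine le_ciInf fun t => ?_
    refine le_of_forall_pos_le_add fun η hη => ?_
    have hopen : IsOpen {u : ℝ | condSurrRisk φp φm pv u < condSurrRisk φp φm pv t + η} :=
      isOpen_lt hQc continuous_const
    have hmem : t ∈ {u : ℝ | condSurrRisk φp φm pv u < condSurrRisk φp φm pv t + η} := by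
      simp [Set.mem_setOf_eq]; linarith
    obtain ⟨q, hq⟩ := Rat.denseRange_cast.exists_mem_open hopen ⟨t, hmem⟩
    exact le_trans (ciInf_le hbq q) (le_of_lt hq)

/-- Tighter excess risk bound under the margin condition: if in addition
`μ{x : |p(x) − π_k| ≤ t} ≤ A·t^α` for all `t ∈ [0, t_max)`, then with `β = α/(1+α)` there is a
constant `D > 0` (depending only on `C, s, A, α`) such that for every measurable `f`,
`ΔR(f) ≤ D·ΔQ(f)^{1/(s+β−βs)}`. -/
theorem stmt_10 {X : Type*} [MeasurableSpace X] (μ : Measure X) [IsProbabilityMeasure μ]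
    (K : ℕ) (hK : 1 ≤ K) (pp : ℕ → ℝ)
    (hpp0' : pp 0 = 0) (hppK1 : pp (K + 1) = 1)
    (hpp0 : 0 < pp 1) (hppK : pp K < 1)
    (hppmono : ∀ k, 1 ≤ k → k < K → pp k < pp (k + 1))
    (p : X → ℝ) (hpmeas : Measurable p) (hp0 : ∀ x, 0 ≤ p x) (hp1 : ∀ x, p x ≤ 1)
    (φp φm : ℝ → ℝ)
    (hφpconv : ConvexOn ℝ Set.univ φp) (hφmconv : ConvexOn ℝ Set.univ φm)
    (hφp0 : ∀ z, 0 ≤ φp z) (hφm0 : ∀ z, 0 ≤ φm z)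
    (δ : ℕ → ℝ) (hδmono : ∀ k, 1 ≤ k → k < K → δ k < δ (k + 1))
    (dp dm : ℕ → ℝ)
    (hcons : ∀ k ∈ Finset.Icc 1 K,
      HasDerivAt φp (dp k) (δ k) ∧ HasDerivAt φm (dm k) (-(δ k))
        ∧ dp k < 0 ∧ dm k < 0 ∧ dm k / (dm k + dp k) = pp k)
    (C s : ℝ) (hC : 0 < C) (hs : 1 ≤ s)
    (hcomp : ∀ x : X, ∀ k ∈ Finset.Icc 1 K,
      |p x - pp k| ^ s ≤ C ^ s * (condSurrRisk φp φm (p x) (δ k)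
        - ⨅ t : ℝ, condSurrRisk φp φm (p x) t))
    -- margin condition with constants A ≥ 1 and α > 0
    (A α : ℝ) (hA : 1 ≤ A) (hα : 0 < α)
    (hmargin : ∀ k ∈ Finset.Icc 1 K, ∀ t : ℝ, 0 ≤ t →
      (∀ j ∈ Finset.Icc 1 (K + 1), t < pp j - pp (j - 1)) →
      μ {x | |p x - pp k| ≤ t} ≤ ENNReal.ofReal (A * t ^ α)) :
    ∃ D : ℝ, 0 < D ∧ ∀ f : X → ℝ, Measurable f →
      excessR μ K pp p δ f
        ≤ ENNReal.ofReal D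
          * excessQ μ φp φm p f ^ (1 / (s + α / (1 + α) - (α / (1 + α)) * s)) := by
  -- basic facts
  have hK0 : (0 : ℝ) < K := by exact_mod_cast hK
  have hppm := aux_mono K pp hppmono
  have hδm := aux_mono K δ hδmono
  have hppb : ∀ k, 1 ≤ k → k ≤ K → 0 ≤ pp k ∧ pp k ≤ 1 := by
    intro k h1 h2
    constructor
    · linarith [hppm 1 k le_rfl h1 h2]
    · linarith [hppm k K h1 h2 le_rfl]
  have hφpc : Continuous φp := by
    rw [← continuousOn_univ]; exact hφpconv.continuousOn isOpen_univ
  have hφmc : Continuous φm := by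
    rw [← continuousOn_univ]; exact hφmconv.continuousOn isOpen_univ
  -- the infimum function and measurability
  set Φ : X → ℝ := fun x => ⨅ t : ℝ, condSurrRisk φp φm (p x) t with hΦdef
  have hΦmeas : Measurable Φ := by
    have heq : Φ = fun x => ⨅ q : ℚ, condSurrRisk φp φm (p x) (q : ℝ) := by
      funext x
      exact aux_iInf_rat hφpc hφmc hφp0 hφm0 (hp0 x) (hp1 x)
    rw [heq]
    apply Measurable.iInf
    intro q
    unfold condSurrRisk
    exact (hpmeas.mul measurable_const).add ((measurable_const.sub hpmeas).mul measurable_const)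
  -- gaps and τ
  have hgap : ∀ j ∈ Finset.Icc 1 (K + 1), 0 < pp j - pp (j - 1) := by
    intro j hj
    obtain ⟨hj1, hj2⟩ := Finset.mem_Icc.mp hj
    rcases eq_or_lt_of_le hj1 with h1 | h1
    · rw [← h1]; simp [hpp0']; linarith
    · rcases eq_or_lt_of_le hj2 with h2 | h2
      · rw [h2]; simp [hppK1]; linarith
      · have hj' : j - 1 + 1 = j := by omega
        have := hppmono (j - 1) (by omega) (by omega)
        rw [hj'] at this; linarith
  have hne : (Finset.Icc 1 (K + 1)).Nonempty := Finset.nonempty_Icc.mpr (by omega)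
  set m := (Finset.Icc 1 (K + 1)).inf' hne (fun j => pp j - pp (j - 1)) with hm
  have hmpos : 0 < m := by
    rw [hm, Finset.lt_inf'_iff]
    exact hgap
  set τ := m / 2 with hτ
  have hτpos : 0 < τ := by positivity
  have hτlt : ∀ j ∈ Finset.Icc 1 (K + 1), τ < pp j - pp (j - 1) := by
    intro j hj
    have h1 : m ≤ pp j - pp (j - 1) := Finset.inf'_le _ hj
    have : τ < m := by rw [hτ]; linarith
    linarith
  -- constants
  set r : ℝ := (1 + α) / (s + α) with hr
  have hsα : (0 : ℝ) < s + α := by linarith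
  have h1α : (0 : ℝ) < 1 + α := by linarith
  have hrpos : 0 < r := by positivity
  have hrexp : 1 / (s + α / (1 + α) - (α / (1 + α)) * s) = r := by
    rw [hr]
    rw [show s + α / (1 + α) - (α / (1 + α)) * s = (s + α) / (1 + α) by field_simp; ring]
    rw [one_div_div]
  have hCs : (0 : ℝ) < C ^ s := Real.rpow_pos_of_pos hC s
  set D : ℝ := max (2 * A + 2 * C ^ s) (2 / τ ^ (1 + α)) with hD
  have hτr : (0 : ℝ) < τ ^ (1 + α) := Real.rpow_pos_of_pos hτpos _
  have hDpos : 0 < D := lt_of_lt_of_le (by positivity) (le_max_right _ _)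
  refine ⟨D, hDpos, ?_⟩
  intro f hf
  rw [hrexp]
  -- per-f setup
  set QT : X → ℝ := fun x => condSurrRisk φp φm (p x) (f x)
      - ⨅ t : ℝ, condSurrRisk φp φm (p x) t with hQTdef
  have hQTx : ∀ x, QT x = condSurrRisk φp φm (p x) (f x)
      - ⨅ t : ℝ, condSurrRisk φp φm (p x) t := fun x => rfl
  have hbdd : ∀ x, BddBelow (Set.range fun t : ℝ => condSurrRisk φp φm (p x) t) := by
    intro x
    exact ⟨0, by rintro y ⟨t, rfl⟩; exact aux_Qnonneg hφp0 hφm0 (hp0 x) (hp1 x) t⟩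
  have hQT0 : ∀ x, 0 ≤ QT x := by
    intro x
    rw [hQTx]
    have := ciInf_le (hbdd x) (f x)
    linarith
  have hQTmeas : Measurable QT := by
    apply Measurable.sub
    · unfold condSurrRisk
      exact (hpmeas.mul (hφpc.measurable.comp hf)).add
        ((measurable_const.sub hpmeas).mul (hφmc.measurable.comp hf.neg))
    · exact hΦmeas
  have hBeq : excessQ μ φp φm p f = ∫⁻ x, ENNReal.ofReal (QT x) ∂μ := rfl
  set B := excessQ μ φp φm p f with hBdef
  -- pointwise comparison via consistency
  have hcompall : ∀ x : X, ∀ k, 1 ≤ k → k ≤ K →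
      ((pp k < p x ∧ f x ≤ δ k) ∨ (p x ≤ pp k ∧ δ k < f x)) →
      |p x - pp k| ^ s ≤ C ^ s * QT x := by
    intro x k h1 h2 hcase
    have hk : k ∈ Finset.Icc 1 K := Finset.mem_Icc.mpr ⟨h1, h2⟩
    obtain ⟨hdp', hdm', hdpn, hdmn, hpik⟩ := hcons k hk
    have hQ := aux_Qcomp hφpconv hφmconv (hp0 x) (hp1 x) hdp' hdm' hdpn hdmn hpik hcase
    have h3 := hcomp x k hk
    have h4 := mul_le_mul_of_nonneg_left
      (sub_le_sub_right hQ (⨅ t : ℝ, condSurrRisk φp φm (p x) t)) hCs.le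
    rw [hQTx]
    linarith
  -- trivial bound
  have htriv : excessR μ K pp p δ f ≤ ENNReal.ofReal 2 := by
    have hpt : ∀ x : X, ENNReal.ofReal
        (condRisk K pp (p x) (((Finset.Icc 1 K).filter fun k => δ k < f x).card)
          - condRisk K pp (p x) (((Finset.Icc 1 K).filter fun k => pp k < p x).card))
        ≤ ENNReal.ofReal 2 := by
      intro x
      apply ENNReal.ofReal_le_ofReal
      obtain ⟨a, b, hbK, heq, hmem⟩ := aux_struct K pp δ hppm hδm (p x) (f x)
      rw [heq]
      have hsum : (∑ k ∈ Finset.Ioc a b, |p x - pp k|) ≤ (K : ℝ) := by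
        calc (∑ k ∈ Finset.Ioc a b, |p x - pp k|)
            ≤ ∑ _k ∈ Finset.Ioc a b, (1 : ℝ) := by
              apply Finset.sum_le_sum
              intro k hk
              obtain ⟨h1, h2, _⟩ := hmem k hk
              obtain ⟨hb1, hb2⟩ := hppb k h1 h2
              rw [abs_le]
              constructor <;> [linarith [hp0 x]; linarith [hp1 x]]
          _ = ((Finset.Ioc a b).card : ℝ) := by rw [Finset.sum_const]; simp
          _ ≤ (K : ℝ) := by
              have : (Finset.Ioc a b).card = b - a := Nat.card_Ioc a b
              have : (Finset.Ioc a b).card ≤ K := by omega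
              exact_mod_cast this
      calc (2 / (K : ℝ)) * ∑ k ∈ Finset.Ioc a b, |p x - pp k|
          ≤ (2 / (K : ℝ)) * K := by
            apply mul_le_mul_of_nonneg_left hsum (by positivity)
        _ = 2 := by field_simp
    calc excessR μ K pp p δ f ≤ ∫⁻ _x, ENNReal.ofReal 2 ∂μ := lintegral_mono hpt
      _ = ENNReal.ofReal 2 := by rw [lintegral_const, measure_univ, mul_one]
  -- master estimate
  have master : ∀ ε : ℝ, 0 < ε → (∀ j ∈ Finset.Icc 1 (K + 1), ε < pp j - pp (j - 1)) →
      excessR μ K pp p δ f ≤ ENNReal.ofReal 2 *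
        (ENNReal.ofReal (A * ε ^ (1 + α)) + ENNReal.ofReal (C ^ s / ε ^ (s - 1)) * B) := by
    intro ε hε hεgap
    set c2 : ℝ := C ^ s / ε ^ (s - 1) with hc2def
    have hεs1 : (0 : ℝ) < ε ^ (s - 1) := Real.rpow_pos_of_pos hε _
    have hc2 : 0 ≤ c2 := le_of_lt (by rw [hc2def]; positivity)
    -- pointwise real bound
    have hpt : ∀ x : X,
        condRisk K pp (p x) (((Finset.Icc 1 K).filter fun k => δ k < f x).card)
          - condRisk K pp (p x) (((Finset.Icc 1 K).filter fun k => pp k < p x).card)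
        ≤ (2 / (K : ℝ)) * ∑ k ∈ Finset.Icc 1 K,
            (if |p x - pp k| ≤ ε then ε else c2 * QT x) := by
      intro x
      obtain ⟨a, b, hbK, heq, hmem⟩ := aux_struct K pp δ hppm hδm (p x) (f x)
      rw [heq]
      apply mul_le_mul_of_nonneg_left _ (by positivity)
      have hsub : Finset.Ioc a b ⊆ Finset.Icc 1 K := by
        intro k hk
        obtain ⟨h1, h2, _⟩ := hmem k hk
        exact Finset.mem_Icc.mpr ⟨h1, h2⟩
      calc (∑ k ∈ Finset.Ioc a b, |p x - pp k|)
          ≤ ∑ k ∈ Finset.Ioc a b, (if |p x - pp k| ≤ ε then ε else c2 * QT x) := by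
            apply Finset.sum_le_sum
            intro k hk
            obtain ⟨h1, h2, hcase⟩ := hmem k hk
            split_ifs with hif
            · exact hif
            · push_neg at hif
              have hη0 : 0 < |p x - pp k| := lt_trans hε hif
              have hcmp := hcompall x k h1 h2 hcase
              have h2' : ε ^ (s - 1) ≤ |p x - pp k| ^ (s - 1) :=
                Real.rpow_le_rpow hε.le hif.le (by linarith)
              have h3 : |p x - pp k| * ε ^ (s - 1) ≤ |p x - pp k| ^ s := by
                have hid : |p x - pp k| ^ s = |p x - pp k| * |p x - pp k| ^ (s - 1) := by
                  rw [show s = 1 + (s - 1) by ring, Real.rpow_add hη0, Real.rpow_one]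
                  ring_nf
                rw [hid]
                exact mul_le_mul_of_nonneg_left h2' hη0.le
              rw [show c2 * QT x = (C ^ s * QT x) / ε ^ (s - 1) by rw [hc2def]; ring]
              rw [le_div_iff₀ hεs1]
              exact le_trans h3 hcmp
        _ ≤ ∑ k ∈ Finset.Icc 1 K, (if |p x - pp k| ≤ ε then ε else c2 * QT x) := by
            apply Finset.sum_le_sum_of_subset_of_nonneg hsub
            intro k _ _
            split_ifs
            · exact hε.le
            · exact mul_nonneg hc2 (hQT0 x)
    -- pointwise ENNReal bound
    have hptE : ∀ x : X, ENNReal.ofReal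
        (condRisk K pp (p x) (((Finset.Icc 1 K).filter fun k => δ k < f x).card)
          - condRisk K pp (p x) (((Finset.Icc 1 K).filter fun k => pp k < p x).card))
        ≤ ∑ k ∈ Finset.Icc 1 K, (ENNReal.ofReal (2 / (K : ℝ)) *
            (Set.indicator {y : X | |p y - pp k| ≤ ε} (fun _ => ENNReal.ofReal ε) x
              + ENNReal.ofReal c2 * ENNReal.ofReal (QT x))) := by
      intro x
      calc ENNReal.ofReal _ ≤ ENNReal.ofReal ((2 / (K : ℝ)) * ∑ k ∈ Finset.Icc 1 K,
              (if |p x - pp k| ≤ ε then ε else c2 * QT x)) :=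
            ENNReal.ofReal_le_ofReal (hpt x)
        _ = ENNReal.ofReal (2 / (K : ℝ)) * ENNReal.ofReal (∑ k ∈ Finset.Icc 1 K,
              (if |p x - pp k| ≤ ε then ε else c2 * QT x)) :=
            ENNReal.ofReal_mul (by positivity)
        _ = ENNReal.ofReal (2 / (K : ℝ)) * ∑ k ∈ Finset.Icc 1 K,
              ENNReal.ofReal (if |p x - pp k| ≤ ε then ε else c2 * QT x) := by
            rw [ENNReal.ofReal_sum_of_nonneg]
            intro k _
            split_ifs
            · exact hε.le
            · exact mul_nonneg hc2 (hQT0 x)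
        _ = ∑ k ∈ Finset.Icc 1 K, ENNReal.ofReal (2 / (K : ℝ)) *
              ENNReal.ofReal (if |p x - pp k| ≤ ε then ε else c2 * QT x) :=
            Finset.mul_sum _ _ _
        _ ≤ ∑ k ∈ Finset.Icc 1 K, (ENNReal.ofReal (2 / (K : ℝ)) *
              (Set.indicator {y : X | |p y - pp k| ≤ ε} (fun _ => ENNReal.ofReal ε) x
                + ENNReal.ofReal c2 * ENNReal.ofReal (QT x))) := by
            apply Finset.sum_le_sum
            intro k _
            apply mul_le_mul_right
            split_ifs with hif
            · rw [Set.indicator_of_mem (show x ∈ {y : X | |p y - pp k| ≤ ε} from hif)]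
              exact le_self_add
            · rw [ENNReal.ofReal_mul hc2]
              exact le_add_self
    -- integrate
    have hSmeas : ∀ k, MeasurableSet {y : X | |p y - pp k| ≤ ε} :=
      fun k => measurableSet_le ((hpmeas.sub measurable_const).abs) measurable_const
    have hFmeas : ∀ k, Measurable fun x : X =>
        Set.indicator {y : X | |p y - pp k| ≤ ε} (fun _ => ENNReal.ofReal ε) x
          + ENNReal.ofReal c2 * ENNReal.ofReal (QT x) :=
      fun k => (measurable_const.indicator (hSmeas k)).add
        (measurable_const.mul hQTmeas.ennreal_ofReal)
    calc excessR μ K pp p δ f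
        ≤ ∫⁻ x, ∑ k ∈ Finset.Icc 1 K, (ENNReal.ofReal (2 / (K : ℝ)) *
            (Set.indicator {y : X | |p y - pp k| ≤ ε} (fun _ => ENNReal.ofReal ε) x
              + ENNReal.ofReal c2 * ENNReal.ofReal (QT x))) ∂μ := lintegral_mono hptE
      _ = ∑ k ∈ Finset.Icc 1 K, ∫⁻ x, ENNReal.ofReal (2 / (K : ℝ)) *
            (Set.indicator {y : X | |p y - pp k| ≤ ε} (fun _ => ENNReal.ofReal ε) x
              + ENNReal.ofReal c2 * ENNReal.ofReal (QT x)) ∂μ :=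
          lintegral_finset_sum _ (fun k _ => ((hFmeas k).const_mul _))
      _ = ∑ k ∈ Finset.Icc 1 K, ENNReal.ofReal (2 / (K : ℝ)) *
            (ENNReal.ofReal ε * μ {y : X | |p y - pp k| ≤ ε}
              + ENNReal.ofReal c2 * ∫⁻ x, ENNReal.ofReal (QT x) ∂μ) := by
          apply Finset.sum_congr rfl
          intro k _
          rw [lintegral_const_mul _ (hFmeas k)]
          congr 1
          rw [lintegral_add_left (measurable_const.indicator (hSmeas k)),
            lintegral_indicator_const (hSmeas k),
            lintegral_const_mul _ hQTmeas.ennreal_ofReal]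
      _ ≤ ∑ _k ∈ Finset.Icc 1 K, ENNReal.ofReal (2 / (K : ℝ)) *
            (ENNReal.ofReal (A * ε ^ (1 + α)) + ENNReal.ofReal c2 * B) := by
          apply Finset.sum_le_sum
          intro k hk
          apply mul_le_mul_right
          rw [hBeq]
          apply add_le_add_left
          calc ENNReal.ofReal ε * μ {y : X | |p y - pp k| ≤ ε}
              ≤ ENNReal.ofReal ε * ENNReal.ofReal (A * ε ^ α) :=
                mul_le_mul_right (hmargin k hk ε hε.le hεgap) _
            _ = ENNReal.ofReal (A * ε ^ (1 + α)) := by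
                rw [← ENNReal.ofReal_mul hε.le]
                congr 1
                rw [Real.rpow_add hε, Real.rpow_one]
                ring
      _ = ENNReal.ofReal 2 *
            (ENNReal.ofReal (A * ε ^ (1 + α)) + ENNReal.ofReal c2 * B) := by
          rw [Finset.sum_const, Nat.card_Icc, nsmul_eq_mul]
          rw [← mul_assoc]
          congr 1
          rw [show ((K + 1 - 1 : ℕ) : ℝ≥0∞) = ENNReal.ofReal (K : ℝ) by
            simp [ENNReal.ofReal_natCast]]
          rw [← ENNReal.ofReal_mul (by positivity)]
          congr 1
          field_simp
    -- final assembly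
  have hαs : (0 : ℝ) < α + s := by linarith
  rcases eq_or_ne B ⊤ with hBtop | hBne
  · rw [hBtop, ENNReal.top_rpow_of_pos hrpos,
      ENNReal.mul_top (ENNReal.ofReal_pos.mpr hDpos).ne']
    exact le_top
  · set b' := B.toReal with hb'def
    have hBofReal : B = ENNReal.ofReal b' := (ENNReal.ofReal_toReal hBne).symm
    rcases eq_or_lt_of_le (ENNReal.toReal_nonneg : (0:ℝ) ≤ b') with hb0 | hb0
    · -- B = 0
      have hB0 : B = 0 := by
        rcases (ENNReal.toReal_eq_zero_iff B).mp hb0.symm with h | h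
        · exact h
        · exact absurd h hBne
      rw [hB0, ENNReal.zero_rpow_of_pos hrpos, mul_zero]
      set g : ℕ → ℝ≥0∞ :=
        fun n => ENNReal.ofReal (2 * (A * (τ * (1 / ((n:ℝ) + 1))) ^ (1 + α))) with hgdef
      have hg : ∀ n : ℕ, excessR μ K pp p δ f ≤ g n := by
        intro n
        have hn1 : (0:ℝ) < (n:ℝ) + 1 := by positivity
        have hεpos : 0 < τ * (1 / ((n:ℝ) + 1)) := by positivity
        have hεle : τ * (1 / ((n:ℝ) + 1)) ≤ τ := by
          have h1 : 1 / ((n:ℝ) + 1) ≤ 1 := by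
            rw [div_le_one hn1]; linarith
          calc τ * (1 / ((n:ℝ) + 1)) ≤ τ * 1 :=
              mul_le_mul_of_nonneg_left h1 hτpos.le
            _ = τ := mul_one τ
        have hεgap : ∀ j ∈ Finset.Icc 1 (K + 1),
            τ * (1 / ((n:ℝ) + 1)) < pp j - pp (j - 1) :=
          fun j hj => lt_of_le_of_lt hεle (hτlt j hj)
        have hma := master _ hεpos hεgap
        rw [hB0, mul_zero, add_zero, ← ENNReal.ofReal_mul (by norm_num : (0:ℝ) ≤ 2)] at hma
        exact hma
      have h0 : Filter.Tendsto (fun n : ℕ => τ * (1 / ((n:ℝ) + 1)))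
          Filter.atTop (nhds 0) := by
        have := tendsto_one_div_add_atTop_nhds_zero_nat (𝕜 := ℝ)
        have h2 := this.const_mul τ
        simpa using h2
      have h1 : Filter.Tendsto (fun n : ℕ => (τ * (1 / ((n:ℝ) + 1))) ^ (1 + α))
          Filter.atTop (nhds 0) := by
        have hc : ContinuousAt (fun x : ℝ => x ^ (1 + α)) 0 :=
          Real.continuousAt_rpow_const 0 (1 + α) (Or.inr h1α.le)
        have := hc.tendsto.comp h0
        rwa [Real.zero_rpow (ne_of_gt h1α)] at this
      have h2 : Filter.Tendsto (fun n : ℕ => 2 * (A * (τ * (1 / ((n:ℝ) + 1))) ^ (1 + α)))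
          Filter.atTop (nhds 0) := by
        have := (h1.const_mul A).const_mul (2:ℝ)
        simpa using this
      have hgt : Filter.Tendsto g Filter.atTop (nhds 0) := by
        have := ENNReal.tendsto_ofReal h2
        simpa [hgdef] using this
      exact ge_of_tendsto' hgt hg
    · -- 0 < b'
      set ε := b' ^ (1 / (α + s)) with hεdef
      have hεpos : 0 < ε := Real.rpow_pos_of_pos hb0 _
      have hbr_pos : 0 < b' ^ r := Real.rpow_pos_of_pos hb0 _
      have hBr : B ^ r = ENNReal.ofReal (b' ^ r) := by
        rw [hBofReal, ← ENNReal.ofReal_rpow_of_pos hb0]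
      have he1 : ε ^ (1 + α) = b' ^ r := by
        rw [hεdef, ← Real.rpow_mul hb0.le,
          show (1 / (α + s)) * (1 + α) = r by rw [hr]; field_simp; ring]
      have he2 : b' / ε ^ (s - 1) = b' ^ r := by
        rw [hεdef, ← Real.rpow_mul hb0.le]
        rw [show b' / b' ^ ((1 / (α + s)) * (s - 1))
            = b' ^ ((1:ℝ) - (1 / (α + s)) * (s - 1)) by
          rw [Real.rpow_sub hb0, Real.rpow_one],
          show (1:ℝ) - (1 / (α + s)) * (s - 1) = r by rw [hr]; field_simp [hαs.ne', hsα.ne']; ring]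
      rcases le_or_gt ε τ with hετ | hτε
      · -- master route
        have hεs1 : (0:ℝ) < ε ^ (s - 1) := Real.rpow_pos_of_pos hεpos _
        have hmas := master ε hεpos (fun j hj => lt_of_le_of_lt hετ (hτlt j hj))
        rw [hBofReal] at hmas
        have hre : ENNReal.ofReal 2 * (ENNReal.ofReal (A * ε ^ (1 + α))
            + ENNReal.ofReal (C ^ s / ε ^ (s - 1)) * ENNReal.ofReal b')
            = ENNReal.ofReal (2 * (A * ε ^ (1 + α) + (C ^ s / ε ^ (s - 1)) * b')) := by
          rw [← ENNReal.ofReal_mul (by positivity : (0:ℝ) ≤ C ^ s / ε ^ (s - 1)),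
            ← ENNReal.ofReal_add (by positivity) (by positivity),
            ← ENNReal.ofReal_mul (by norm_num : (0:ℝ) ≤ 2)]
        rw [hre] at hmas
        have hreal : 2 * (A * ε ^ (1 + α) + (C ^ s / ε ^ (s - 1)) * b') ≤ D * b' ^ r := by
          have e2 : (C ^ s / ε ^ (s - 1)) * b' = C ^ s * (b' ^ r) := by
            rw [← he2]; field_simp
          rw [he1, e2]
          have hDge : 2 * A + 2 * C ^ s ≤ D := le_max_left _ _
          calc 2 * (A * b' ^ r + C ^ s * b' ^ r)
              = (2 * A + 2 * C ^ s) * b' ^ r := by ring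
            _ ≤ D * b' ^ r := mul_le_mul_of_nonneg_right hDge hbr_pos.le
        calc excessR μ K pp p δ f
            ≤ ENNReal.ofReal (2 * (A * ε ^ (1 + α) + (C ^ s / ε ^ (s - 1)) * b')) := hmas
          _ ≤ ENNReal.ofReal (D * b' ^ r) := ENNReal.ofReal_le_ofReal hreal
          _ = ENNReal.ofReal D * B ^ r := by
              rw [ENNReal.ofReal_mul hDpos.le, hBr]
      · -- trivial route
        have h1 : τ ^ (α + s) < b' := by
          calc τ ^ (α + s) < ε ^ (α + s) :=
              Real.rpow_lt_rpow hτpos.le hτε (by linarith)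
            _ = b' := by
              rw [hεdef, ← Real.rpow_mul hb0.le,
                show (1 / (α + s)) * (α + s) = (1:ℝ) by field_simp]
              exact Real.rpow_one b'
        have h2 : τ ^ (1 + α) ≤ b' ^ r := by
          have e3 : τ ^ (1 + α) = (τ ^ (α + s)) ^ r := by
            rw [← Real.rpow_mul hτpos.le,
              show (α + s) * r = 1 + α by rw [hr]; field_simp [hαs.ne', hsα.ne']; ring]
          rw [e3]
          exact Real.rpow_le_rpow (by positivity) h1.le hrpos.le
        have h3 : (2:ℝ) ≤ D * b' ^ r := by
          have hD2 : 2 / τ ^ (1 + α) ≤ D := le_max_right _ _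
          calc (2:ℝ) = (2 / τ ^ (1 + α)) * τ ^ (1 + α) := by field_simp
            _ ≤ (2 / τ ^ (1 + α)) * b' ^ r :=
              mul_le_mul_of_nonneg_left h2 (by positivity)
            _ ≤ D * b' ^ r := mul_le_mul_of_nonneg_right hD2 hbr_pos.le
        calc excessR μ K pp p δ f ≤ ENNReal.ofReal 2 := htriv
          _ ≤ ENNReal.ofReal (D * b' ^ r) := ENNReal.ofReal_le_ofReal h3
          _ = ENNReal.ofReal D * B ^ r := by
              rw [ENNReal.ofReal_mul hDpos.le, hBr]
end

section
/- Suppose conditions (C1)–(C3) hold for the piecewise linear surrogates φ⁺, φ⁻. Then for every p ∈ [0,1], the pointwise surrogate-optimal value t*_p is a global minimizer of the conditional surrogate risk: Q_p(t*_p) ≤ Q_p(t) for all t ∈ ℝ. (Explicitly: if p ≤ π_1 the minimizer is H_0; if p ∈ (π_k, π_{k+1}] for 1 ≤ k ≤ K−1 the minimizer is the hinge point H_k; and if p > π_K the minimizer is H_K.) -/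
private lemma chain_le (f : ℕ → ℝ) {a b : ℕ} (hab : a ≤ b)
    (h : ∀ j, a ≤ j → j < b → f j ≤ f (j + 1)) : f a ≤ f b := by
  induction b, hab using Nat.le_induction with
  | base => exact le_rfl
  | succ n hn ih =>
    exact le_trans (ih fun j hj hjn => h j hj (by omega)) (h n hn (by omega))

private lemma chain_ge (f : ℕ → ℝ) {a b : ℕ} (hab : a ≤ b)
    (h : ∀ j, a ≤ j → j < b → f (j + 1) ≤ f j) : f b ≤ f a := by
  induction b, hab using Nat.le_induction with
  | base => exact le_rfl
  | succ n hn ih =>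
    exact le_trans (h n hn (by omega)) (ih fun j hj hjn => h j hj (by omega))

private lemma phiPL_le {K : ℕ} {A B : ℕ → ℝ} {z c : ℝ} (h0 : 0 ≤ c)
    (h : ∀ k ∈ Finset.Icc 1 K, A k + B k * z ≤ c) : phiPL K A B z ≤ c := by
  unfold phiPL; exact (Finset.fold_max_le c).2 ⟨h0, h⟩

private lemma le_phiPL {K : ℕ} {A B : ℕ → ℝ} {z : ℝ} {k : ℕ} (hk : k ∈ Finset.Icc 1 K) :
    A k + B k * z ≤ phiPL K A B z := by
  unfold phiPL; exact (Finset.le_fold_max _).2 (Or.inr ⟨k, hk, le_rfl⟩)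

private lemma phiPL_nonneg {K : ℕ} {A B : ℕ → ℝ} {z : ℝ} : 0 ≤ phiPL K A B z := by
  unfold phiPL; exact (Finset.le_fold_max _).2 (Or.inl le_rfl)

set_option maxHeartbeats 2000000 in
/-- Under conditions (C1)-(C3), the pointwise surrogate-optimal value `t*_p`
(`H_0` if `p ≤ π_1`, `H_k` if `p ∈ (π_k, π_{k+1}]`, `H_K` if `p > π_K`)
is a global minimizer of the conditional surrogate risk `Q_p` over `ℝ`. -/
theorem stmt_11 (K : ℕ) (hK : 1 ≤ K) (pp : ℕ → ℝ)
    (hpp0 : 0 < pp 1) (hppK : pp K < 1)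
    (hppmono : ∀ k, 1 ≤ k → k < K → pp k < pp (k + 1))
    (Ap Bp Am Bm : ℕ → ℝ) (H Hm : ℕ → ℝ)
    -- hinge points
    (hH0 : H 0 = Am 1 / Bm 1)
    (hHmid : ∀ k, 1 ≤ k → k ≤ K - 1 → H k = (Ap k - Ap (k + 1)) / (Bp (k + 1) - Bp k))
    (hHK : H K = -Ap K / Bp K)
    (hHm : ∀ k, 1 ≤ k → k ≤ K - 1 → Hm k = (Am k - Am (k + 1)) / (Bm (k + 1) - Bm k))
    -- (C1)
    (hC1p : ∀ k, 1 ≤ k → k < K → Bp k < Bp (k + 1)) (hC1pK : Bp K < 0)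
    (hC1m : ∀ k, 1 ≤ k → k < K → Bm (k + 1) < Bm k) (hC1m1 : Bm 1 < 0)
    -- (C2)
    (hC2a : ∀ k, 1 ≤ k → k ≤ K - 1 → -Hm k = H k)
    (hC2b : ∀ k, k < K → H k < H (k + 1))
    -- (C3)
    (hC3 : ∀ k ∈ Finset.Icc 1 K, Bm k / (Bm k + Bp k) = pp k)
    -- pointwise surrogate-optimal value
    (tst : ℝ → ℝ)
    (htst0 : ∀ p : ℝ, p ≤ pp 1 → tst p = H 0)
    (htstmid : ∀ p : ℝ, ∀ k, 1 ≤ k → k ≤ K - 1 → pp k < p → p ≤ pp (k + 1) → tst p = H k)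
    (htstK : ∀ p : ℝ, pp K < p → tst p = H K) :
    ∀ p : ℝ, 0 ≤ p → p ≤ 1 → ∀ t : ℝ,
      condSurrRisk (phiPL K Ap Bp) (phiPL K Am Bm) p (tst p)
        ≤ condSurrRisk (phiPL K Ap Bp) (phiPL K Am Bm) p t := by
  intro p hp0 hp1 t
  have hp1' : (0:ℝ) ≤ 1 - p := by linarith
  -- monotonicity of the hinge points
  have Hmono : ∀ i j : ℕ, i < j → j ≤ K → H i < H j := by
    intro i j hij hjK
    induction j with
    | zero => omega
    | succ n ih =>
      rcases Nat.lt_succ_iff_lt_or_eq.1 hij with h | h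
      · exact lt_trans (ih h (by omega)) (hC2b n (by omega))
      · subst h; exact hC2b i (by omega)
  -- all slopes are negative
  have BpNeg : ∀ j, 1 ≤ j → j ≤ K → Bp j < 0 := by
    intro j h1 hjK
    have : Bp j ≤ Bp K :=
      chain_le Bp hjK (fun m hm hmK => (hC1p m (le_trans h1 hm) hmK).le)
    linarith
  have BmNeg : ∀ j, 1 ≤ j → j ≤ K → Bm j < 0 := by
    intro j h1 hjK
    have : Bm j ≤ Bm 1 :=
      chain_ge Bm h1 (fun m hm hmj => (hC1m m hm (by omega)).le)
    linarith
  -- (C3) rewritten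
  have hBmC3 : ∀ j, 1 ≤ j → j ≤ K → Bm j = pp j * (Bm j + Bp j) := by
    intro j h1 h2
    have hs : Bm j + Bp j < 0 := by
      have := BpNeg j h1 h2; have := BmNeg j h1 h2; linarith
    exact (div_eq_iff hs.ne).1 (hC3 j (Finset.mem_Icc.2 ⟨h1, h2⟩))
  -- crossing equations
  have crossP : ∀ j, 1 ≤ j → j < K → Ap j - Ap (j + 1) = H j * (Bp (j + 1) - Bp j) := by
    intro j h1 h2
    have hd : Bp (j + 1) - Bp j ≠ 0 := by have := hC1p j h1 h2; linarith
    rw [hHmid j h1 (by omega), div_mul_cancel₀ _ hd]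
  have crossM : ∀ j, 1 ≤ j → j < K → Am j - Am (j + 1) = (-H j) * (Bm (j + 1) - Bm j) := by
    intro j h1 h2
    have hd : Bm (j + 1) - Bm j ≠ 0 := by have := hC1m j h1 h2; linarith
    rw [← hC2a j h1 (by omega), neg_neg, hHm j h1 (by omega), div_mul_cancel₀ _ hd]
  -- step comparisons between consecutive pieces
  have stepPup : ∀ j, 1 ≤ j → j < K → ∀ u : ℝ, H j ≤ u →
      Ap j + Bp j * u ≤ Ap (j + 1) + Bp (j + 1) * u := by
    intro j h1 h2 u hu
    have hd : (0:ℝ) < Bp (j + 1) - Bp j := by have := hC1p j h1 h2; linarith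
    nlinarith [crossP j h1 h2, mul_le_mul_of_nonneg_right hu hd.le]
  have stepPdn : ∀ j, 1 ≤ j → j < K → ∀ u : ℝ, u ≤ H j →
      Ap (j + 1) + Bp (j + 1) * u ≤ Ap j + Bp j * u := by
    intro j h1 h2 u hu
    have hd : (0:ℝ) < Bp (j + 1) - Bp j := by have := hC1p j h1 h2; linarith
    nlinarith [crossP j h1 h2, mul_le_mul_of_nonneg_right hu hd.le]
  have stepMup : ∀ j, 1 ≤ j → j < K → ∀ z : ℝ, z ≤ -H j →
      Am j + Bm j * z ≤ Am (j + 1) + Bm (j + 1) * z := by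
    intro j h1 h2 z hz
    have hd : Bm (j + 1) - Bm j < 0 := by have := hC1m j h1 h2; linarith
    nlinarith [crossM j h1 h2, mul_le_mul_of_nonpos_right hz hd.le]
  have stepMdn : ∀ j, 1 ≤ j → j < K → ∀ z : ℝ, -H j ≤ z →
      Am (j + 1) + Bm (j + 1) * z ≤ Am j + Bm j * z := by
    intro j h1 h2 z hz
    have hd : Bm (j + 1) - Bm j < 0 := by have := hC1m j h1 h2; linarith
    nlinarith [crossM j h1 h2, mul_le_mul_of_nonpos_right hz hd.le]
  -- zero values at the extreme hinge points
  have hApK0 : Ap K + Bp K * H K = 0 := by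
    have hne : Bp K ≠ 0 := hC1pK.ne
    rw [hHK]; field_simp; ring
  have hAm10 : Am 1 + Bm 1 * (-H 0) = 0 := by
    have hne : Bm 1 ≠ 0 := hC1m1.ne
    rw [hH0]; field_simp; ring
  -- evaluation of φ⁺ at points where piece k is active
  have phiP_eval : ∀ k, 1 ≤ k → k ≤ K → ∀ u : ℝ,
      (∀ j, 1 ≤ j → j < k → H j ≤ u) → (∀ j, k ≤ j → j < K → u ≤ H j) → u ≤ H K →
      phiPL K Ap Bp u = Ap k + Bp k * u := by
    intro k hk1 hkK u hlo hhi huK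
    have hmax : ∀ j, 1 ≤ j → j ≤ K → Ap j + Bp j * u ≤ Ap k + Bp k * u := by
      intro j hj1 hjK
      rcases le_or_gt j k with h | h
      · exact chain_le (fun m => Ap m + Bp m * u) h
          (fun m hm hmk => stepPup m (le_trans hj1 hm) (by omega) u
            (hlo m (le_trans hj1 hm) hmk))
      · exact chain_ge (fun m => Ap m + Bp m * u) h.le
          (fun m hm hmj => stepPdn m (le_trans hk1 hm) (by omega) u (hhi m hm (by omega)))
    have hK0 : 0 ≤ Ap K + Bp K * u := by
      nlinarith [hApK0, mul_le_mul_of_nonpos_left huK hC1pK.le]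
    have hk0 : 0 ≤ Ap k + Bp k * u := le_trans hK0 (hmax K hK le_rfl)
    refine le_antisymm (phiPL_le hk0 fun j hj => ?_)
      (le_phiPL (Finset.mem_Icc.2 ⟨hk1, hkK⟩))
    obtain ⟨h1, h2⟩ := Finset.mem_Icc.1 hj
    exact hmax j h1 h2
  -- evaluation of φ⁻ at points where piece k is active
  have phiM_eval : ∀ k, 1 ≤ k → k ≤ K → ∀ z : ℝ,
      (∀ j, 1 ≤ j → j < k → z ≤ -H j) → (∀ j, k ≤ j → j < K → -H j ≤ z) → z ≤ -H 0 →
      phiPL K Am Bm z = Am k + Bm k * z := by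
    intro k hk1 hkK z hlo hhi hz0
    have hmax : ∀ j, 1 ≤ j → j ≤ K → Am j + Bm j * z ≤ Am k + Bm k * z := by
      intro j hj1 hjK
      rcases le_or_gt j k with h | h
      · exact chain_le (fun m => Am m + Bm m * z) h
          (fun m hm hmk => stepMup m (le_trans hj1 hm) (by omega) z
            (hlo m (le_trans hj1 hm) hmk))
      · exact chain_ge (fun m => Am m + Bm m * z) h.le
          (fun m hm hmj => stepMdn m (le_trans hk1 hm) (by omega) z (hhi m hm (by omega)))
    have h10 : 0 ≤ Am 1 + Bm 1 * z := by
      nlinarith [hAm10, mul_le_mul_of_nonpos_left hz0 hC1m1.le]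
    have hk0 : 0 ≤ Am k + Bm k * z := le_trans h10 (hmax 1 le_rfl hK)
    refine le_antisymm (phiPL_le hk0 fun j hj => ?_)
      (le_phiPL (Finset.mem_Icc.2 ⟨hk1, hkK⟩))
    obtain ⟨h1, h2⟩ := Finset.mem_Icc.1 hj
    exact hmax j h1 h2
  -- lower bounds on the risk at t
  have Qlb : ∀ m, 1 ≤ m → m ≤ K →
      p * (Ap m + Bp m * t) + (1 - p) * (Am m + Bm m * (-t)) ≤
        condSurrRisk (phiPL K Ap Bp) (phiPL K Am Bm) p t := by
    intro m h1 h2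
    have hm : m ∈ Finset.Icc 1 K := Finset.mem_Icc.2 ⟨h1, h2⟩
    exact add_le_add (mul_le_mul_of_nonneg_left (le_phiPL hm) hp0)
      (mul_le_mul_of_nonneg_left (le_phiPL hm) hp1')
  have QlbP : ∀ m, 1 ≤ m → m ≤ K →
      p * (Ap m + Bp m * t) ≤ condSurrRisk (phiPL K Ap Bp) (phiPL K Am Bm) p t := by
    intro m h1 h2
    have hm : m ∈ Finset.Icc 1 K := Finset.mem_Icc.2 ⟨h1, h2⟩
    have h3 := mul_le_mul_of_nonneg_left
      (le_phiPL hm : Ap m + Bp m * t ≤ phiPL K Ap Bp t) hp0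
    have h4 := mul_nonneg hp1' (phiPL_nonneg (K := K) (A := Am) (B := Bm) (z := -t))
    unfold condSurrRisk; linarith
  have QlbM : ∀ m, 1 ≤ m → m ≤ K →
      (1 - p) * (Am m + Bm m * (-t)) ≤
        condSurrRisk (phiPL K Ap Bp) (phiPL K Am Bm) p t := by
    intro m h1 h2
    have hm : m ∈ Finset.Icc 1 K := Finset.mem_Icc.2 ⟨h1, h2⟩
    have h3 := mul_le_mul_of_nonneg_left
      (le_phiPL hm : Am m + Bm m * (-t) ≤ phiPL K Am Bm (-t)) hp1'
    have h4 := mul_nonneg hp0 (phiPL_nonneg (K := K) (A := Ap) (B := Bp) (z := t))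
    unfold condSurrRisk; linarith
  -- the slope identity
  have slope : ∀ m, 1 ≤ m → m ≤ K →
      p * Bp m - (1 - p) * Bm m = (p - pp m) * (Bp m + Bm m) := by
    intro m h1 h2
    linear_combination -hBmC3 m h1 h2
  -- the core optimality argument
  have core : ∀ a b : ℕ, 1 ≤ a → a ≤ b → b ≤ K → ∀ u : ℝ,
      phiPL K Ap Bp u = Ap a + Bp a * u →
      phiPL K Am Bm (-u) = Am a + Bm a * (-u) →
      phiPL K Ap Bp u = Ap b + Bp b * u →
      phiPL K Am Bm (-u) = Am b + Bm b * (-u) →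
      (Am a + Bm a * (-u) = 0 ∨ pp a ≤ p) →
      (Ap b + Bp b * u = 0 ∨ p ≤ pp b) →
      condSurrRisk (phiPL K Ap Bp) (phiPL K Am Bm) p u ≤
        condSurrRisk (phiPL K Ap Bp) (phiPL K Am Bm) p t := by
    intro a b ha1 hab hbK u hPa hMa hPb hMb hA hB
    have haK : a ≤ K := le_trans hab hbK
    have hb1 : 1 ≤ b := le_trans ha1 hab
    rcases le_total t u with htu | htu
    · -- t on the left of u : use piece a
      have hQu : condSurrRisk (phiPL K Ap Bp) (phiPL K Am Bm) p u
          = p * (Ap a + Bp a * u) + (1 - p) * (Am a + Bm a * (-u)) := by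
        unfold condSurrRisk; rw [hPa, hMa]
      rcases hA with h0 | hpa
      · have h1 := QlbP a ha1 haK
        have hBpa := BpNeg a ha1 haK
        have h2 : p * (Ap a + Bp a * u) ≤ p * (Ap a + Bp a * t) := by
          have := mul_le_mul_of_nonpos_left htu hBpa.le
          exact mul_le_mul_of_nonneg_left (by linarith) hp0
        rw [hQu, h0]
        linarith
      · have h1 := Qlb a ha1 haK
        have hsum : Bp a + Bm a < 0 := by
          have := BpNeg a ha1 haK; have := BmNeg a ha1 haK; linarith
        have hss : p * Bp a - (1 - p) * Bm a ≤ 0 := by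
          rw [slope a ha1 haK]
          exact mul_nonpos_of_nonneg_of_nonpos (by linarith) hsum.le
        have key : p * (Ap a + Bp a * u) + (1 - p) * (Am a + Bm a * (-u)) ≤
            p * (Ap a + Bp a * t) + (1 - p) * (Am a + Bm a * (-t)) := by
          nlinarith [mul_nonpos_of_nonneg_of_nonpos (sub_nonneg.2 htu) hss]
        rw [hQu]
        linarith
    · -- t on the right of u : use piece b
      have hQu : condSurrRisk (phiPL K Ap Bp) (phiPL K Am Bm) p u
          = p * (Ap b + Bp b * u) + (1 - p) * (Am b + Bm b * (-u)) := by
        unfold condSurrRisk; rw [hPb, hMb]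
      rcases hB with h0 | hpb
      · have h1 := QlbM b hb1 hbK
        have hBmb := BmNeg b hb1 hbK
        have h2 : (1 - p) * (Am b + Bm b * (-u)) ≤ (1 - p) * (Am b + Bm b * (-t)) := by
          have := mul_le_mul_of_nonpos_left (neg_le_neg htu) hBmb.le
          exact mul_le_mul_of_nonneg_left (by linarith) hp1'
        rw [hQu, h0]
        linarith
      · have h1 := Qlb b hb1 hbK
        have hsum : Bp b + Bm b < 0 := by
          have := BpNeg b hb1 hbK; have := BmNeg b hb1 hbK; linarith
        have hss : 0 ≤ p * Bp b - (1 - p) * Bm b := by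
          rw [slope b hb1 hbK]
          nlinarith [mul_nonneg (by linarith : (0:ℝ) ≤ pp b - p)
            (by linarith : (0:ℝ) ≤ -(Bp b + Bm b))]
        have key : p * (Ap b + Bp b * u) + (1 - p) * (Am b + Bm b * (-u)) ≤
            p * (Ap b + Bp b * t) + (1 - p) * (Am b + Bm b * (-t)) := by
          nlinarith [mul_nonneg (sub_nonneg.2 htu) hss]
        rw [hQu]
        linarith
  -- case analysis on p
  by_cases hc1 : p ≤ pp 1
  · rw [htst0 p hc1]
    have hP : phiPL K Ap Bp (H 0) = Ap 1 + Bp 1 * H 0 :=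
      phiP_eval 1 le_rfl hK (H 0)
        (fun j hj hjk => absurd hjk (by omega))
        (fun j hj hjK => (Hmono 0 j (by omega) (by omega)).le)
        (Hmono 0 K (by omega) le_rfl).le
    have hM : phiPL K Am Bm (-H 0) = Am 1 + Bm 1 * (-H 0) :=
      phiM_eval 1 le_rfl hK (-H 0)
        (fun j hj hjk => absurd hjk (by omega))
        (fun j hj hjK => neg_le_neg (Hmono 0 j (by omega) (by omega)).le)
        le_rfl
    exact core 1 1 le_rfl le_rfl hK (H 0) hP hM hP hM (Or.inl hAm10) (Or.inr hc1)
  · by_cases hc3 : pp K < p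
    · rw [htstK p hc3]
      have hP : phiPL K Ap Bp (H K) = Ap K + Bp K * H K :=
        phiP_eval K hK le_rfl (H K)
          (fun j hj hjK => (Hmono j K hjK le_rfl).le)
          (fun j hj hjK => absurd hjK (by omega))
          le_rfl
      have hM : phiPL K Am Bm (-H K) = Am K + Bm K * (-H K) :=
        phiM_eval K hK le_rfl (-H K)
          (fun j hj hjK => neg_le_neg (Hmono j K hjK le_rfl).le)
          (fun j hj hjK => absurd hjK (by omega))
          (neg_le_neg (Hmono 0 K (by omega) le_rfl).le)
      exact core K K hK le_rfl le_rfl (H K) hP hM hP hM (Or.inr hc3.le) (Or.inl hApK0)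
    · push_neg at hc1 hc3
      have hK2 : 2 ≤ K := by
        by_contra h
        have hK1 : K = 1 := by omega
        rw [hK1] at hc3
        linarith
      classical
      obtain ⟨k, hk1, hkK, hklt, hkle⟩ :
          ∃ k, 1 ≤ k ∧ k ≤ K - 1 ∧ pp k < p ∧ p ≤ pp (k + 1) := by
        set S := (Finset.Icc 1 (K - 1)).filter (fun k => pp k < p) with hSdef
        have hS : S.Nonempty :=
          ⟨1, Finset.mem_filter.2 ⟨Finset.mem_Icc.2 ⟨le_rfl, by omega⟩, hc1⟩⟩
        obtain ⟨hkIcc, hklt⟩ := Finset.mem_filter.1 (S.max'_mem hS)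
        have hk1' := (Finset.mem_Icc.1 hkIcc).1
        have hk2' := (Finset.mem_Icc.1 hkIcc).2
        refine ⟨S.max' hS, hk1', hk2', hklt, ?_⟩
        by_cases h : S.max' hS = K - 1
        · rw [h]
          have hh : K - 1 + 1 = K := by omega
          rw [hh]
          exact hc3
        · by_contra hcon
          push_neg at hcon
          have hmem : S.max' hS + 1 ∈ S :=
            Finset.mem_filter.2 ⟨Finset.mem_Icc.2 ⟨by omega, by omega⟩, hcon⟩
          have := Finset.le_max' S _ hmem
          omega
      have hkK' : k < K := by omega
      rw [htstmid p k hk1 hkK hklt hkle]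
      have hcrossP := crossP k hk1 hkK'
      have hcrossM := crossM k hk1 hkK'
      have hPa : phiPL K Ap Bp (H k) = Ap k + Bp k * H k :=
        phiP_eval k hk1 (by omega) (H k)
          (fun j hj hjk => (Hmono j k hjk (by omega)).le)
          (fun j hjk hjK => by
            rcases eq_or_lt_of_le hjk with h | h
            · exact le_of_eq (congrArg H h)
            · exact (Hmono k j h hjK.le).le)
          (Hmono k K hkK' le_rfl).le
      have hMa : phiPL K Am Bm (-H k) = Am k + Bm k * (-H k) :=
        phiM_eval k hk1 (by omega) (-H k)
          (fun j hj hjk => neg_le_neg (Hmono j k hjk (by omega)).le)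
          (fun j hjk hjK => by
            rcases eq_or_lt_of_le hjk with h | h
            · exact le_of_eq (congrArg (fun m => -H m) h.symm)
            · exact neg_le_neg (Hmono k j h hjK.le).le)
          (neg_le_neg (Hmono 0 k (by omega) (by omega)).le)
      have hPb : phiPL K Ap Bp (H k) = Ap (k + 1) + Bp (k + 1) * H k := by
        rw [hPa]; linear_combination hcrossP
      have hMb : phiPL K Am Bm (-H k) = Am (k + 1) + Bm (k + 1) * (-H k) := by
        rw [hMa]; linear_combination hcrossM
      exact core k (k + 1) hk1 (Nat.le_succ k) (by omega) (H k) hPa hMa hPb hMb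
        (Or.inr hklt.le) (Or.inr hkle)
end

section
/- Suppose conditions (C1)–(C3) hold for the piecewise linear surrogates φ⁺, φ⁻, and let δ_1 < ⋯ < δ_K satisfy H_{k−1} < δ_k < H_k for each k ∈ {1,…,K}. Then the pointwise comparison inequality holds with exponent s = 1 and constant C = max{ −π_k/(B⁻_k·|δ_k − H_j|) : 1 ≤ k ≤ K, 0 ≤ j ≤ K }: namely, for every p ∈ [0,1] and every k ∈ {1,…,K}, |p − π_k| ≤ C·( Q_p(δ_k) − Q_p(t*_p) ). -/
lemma step_le' (f : ℕ → ℝ) (a b : ℕ) (hab : a ≤ b)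
    (h : ∀ i, a ≤ i → i < b → f i ≤ f (i + 1)) : f a ≤ f b := by
  induction b, hab using Nat.le_induction with
  | base => exact le_rfl
  | succ n hn ih =>
    exact (ih fun i hi hib => h i hi (by omega)).trans (h n hn (by omega))

lemma step_ge' (f : ℕ → ℝ) (a b : ℕ) (hab : a ≤ b)
    (h : ∀ i, a ≤ i → i < b → f (i + 1) ≤ f i) : f b ≤ f a := by
  have := step_le' (fun n => -f n) a b hab (fun i hi hib => by simpa using h i hi hib)
  simpa using this

lemma phiPL_ge' (K : ℕ) (A B : ℕ → ℝ) (z : ℝ) {j : ℕ} (hj : j ∈ Finset.Icc 1 K) :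
    A j + B j * z ≤ phiPL K A B z := by
  unfold phiPL
  exact (Finset.le_fold_max _).mpr (Or.inr ⟨j, hj, le_rfl⟩)

lemma phiPL_eq' (K : ℕ) (A B : ℕ → ℝ) (z : ℝ) {k : ℕ} (hk : k ∈ Finset.Icc 1 K)
    (h0 : 0 ≤ A k + B k * z)
    (hmax : ∀ j ∈ Finset.Icc 1 K, A j + B j * z ≤ A k + B k * z) :
    phiPL K A B z = A k + B k * z := by
  refine le_antisymm ?_ (phiPL_ge' K A B z hk)
  unfold phiPL
  exact (Finset.fold_max_le _).mpr ⟨h0, hmax⟩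

set_option maxHeartbeats 2000000

/-- Pointwise comparison inequality for minimally consistent piecewise linear surrogates:
with `s = 1` and `C = max{ −π_k/(B⁻_k·|δ_k − H_j|) : 1 ≤ k ≤ K, 0 ≤ j ≤ K }`, for every
`p ∈ [0,1]` and `k`, `|p − π_k| ≤ C·(Q_p(δ_k) − Q_p(t*_p))`. -/
theorem stmt_12 (K : ℕ) (hK : 1 ≤ K) (pp : ℕ → ℝ)
    (hpp0 : 0 < pp 1) (hppK : pp K < 1)
    (hppmono : ∀ k, 1 ≤ k → k < K → pp k < pp (k + 1))
    (Ap Bp Am Bm : ℕ → ℝ) (H Hm : ℕ → ℝ)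
    (hH0 : H 0 = Am 1 / Bm 1)
    (hHmid : ∀ k, 1 ≤ k → k ≤ K - 1 → H k = (Ap k - Ap (k + 1)) / (Bp (k + 1) - Bp k))
    (hHK : H K = -Ap K / Bp K)
    (hHm : ∀ k, 1 ≤ k → k ≤ K - 1 → Hm k = (Am k - Am (k + 1)) / (Bm (k + 1) - Bm k))
    (hC1p : ∀ k, 1 ≤ k → k < K → Bp k < Bp (k + 1)) (hC1pK : Bp K < 0)
    (hC1m : ∀ k, 1 ≤ k → k < K → Bm (k + 1) < Bm k) (hC1m1 : Bm 1 < 0)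
    (hC2a : ∀ k, 1 ≤ k → k ≤ K - 1 → -Hm k = H k)
    (hC2b : ∀ k, k < K → H k < H (k + 1))
    (hC3 : ∀ k ∈ Finset.Icc 1 K, Bm k / (Bm k + Bp k) = pp k)
    -- pointwise surrogate-optimal value
    (tst : ℝ → ℝ)
    (htst0 : ∀ p : ℝ, p ≤ pp 1 → tst p = H 0)
    (htstmid : ∀ p : ℝ, ∀ k, 1 ≤ k → k ≤ K - 1 → pp k < p → p ≤ pp (k + 1) → tst p = H k)
    (htstK : ∀ p : ℝ, pp K < p → tst p = H K)
    -- thresholds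
    (δ : ℕ → ℝ) (hδ : ∀ k ∈ Finset.Icc 1 K, H (k - 1) < δ k ∧ δ k < H k)
    -- the constant C
    (C : ℝ)
    (hC : IsGreatest
      {c : ℝ | ∃ k ∈ Finset.Icc 1 K, ∃ j ∈ Finset.Icc 0 K,
        c = -(pp k) / (Bm k * |δ k - H j|)} C) :
    ∀ p : ℝ, 0 ≤ p → p ≤ 1 → ∀ k ∈ Finset.Icc 1 K,
      |p - pp k| ≤ C * (condSurrRisk (phiPL K Ap Bp) (phiPL K Am Bm) p (δ k)
        - condSurrRisk (phiPL K Ap Bp) (phiPL K Am Bm) p (tst p)) := by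
  intro p hp0 hp1 k hkmem
  rw [Finset.mem_Icc] at hkmem
  obtain ⟨hk1, hkK⟩ := hkmem
  set Q : ℝ → ℝ := condSurrRisk (phiPL K Ap Bp) (phiPL K Am Bm) p with hQdef
  clear_value Q
  -- basic sign facts
  have hBpneg : ∀ i, 1 ≤ i → i ≤ K → Bp i < 0 := by
    intro i h1 h2
    have : Bp i ≤ Bp K := step_le' Bp i K h2 (fun l hl hlk => (hC1p l (h1.trans hl) hlk).le)
    linarith
  have hBmneg : ∀ i, 1 ≤ i → i ≤ K → Bm i < 0 := by
    intro i h1 h2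
    have h : -Bm 1 ≤ -Bm i := step_le' (fun n => -Bm n) 1 i h1 (fun l hl hli => by
      have := hC1m l hl (by omega)
      show -Bm l ≤ -Bm (l + 1)
      linarith)
    linarith
  have hsumneg : ∀ i, 1 ≤ i → i ≤ K → Bm i + Bp i < 0 := by
    intro i h1 h2
    linarith [hBmneg i h1 h2, hBpneg i h1 h2]
  have hppmono' : ∀ a b, 1 ≤ a → a ≤ b → b ≤ K → pp a ≤ pp b := fun a b h1 hab hbK =>
    step_le' pp a b hab (fun i hi hib => (hppmono i (h1.trans hi) (by omega)).le)
  have hHmono : ∀ a b, a ≤ b → b ≤ K → H a ≤ H b := fun a b hab hbK =>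
    step_le' H a b hab (fun i hi hib => (hC2b i (by omega)).le)
  have hC3' : ∀ i, 1 ≤ i → i ≤ K → pp i * (Bm i + Bp i) = Bm i := by
    intro i h1 h2
    have h := hC3 i (Finset.mem_Icc.mpr ⟨h1, h2⟩)
    have hne : Bm i + Bp i ≠ 0 := (hsumneg i h1 h2).ne
    rw [div_eq_iff hne] at h
    linarith
  have hLrep' : ∀ i, 1 ≤ i → i ≤ K →
      p * Bp i - (1 - p) * Bm i = (Bm i + Bp i) * (p - pp i) := by
    intro i h1 h2
    linear_combination hC3' i h1 h2
  have hfcross : ∀ i, 1 ≤ i → i < K → Ap i + Bp i * H i = Ap (i + 1) + Bp (i + 1) * H i := by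
    intro i h1 h2
    have hd : Bp (i + 1) - Bp i ≠ 0 := by have := hC1p i h1 h2; linarith
    rw [hHmid i h1 (by omega)]
    field_simp
    ring
  have hgcross : ∀ i, 1 ≤ i → i < K →
      Am i + Bm i * (-H i) = Am (i + 1) + Bm (i + 1) * (-H i) := by
    intro i h1 h2
    have hd : Bm (i + 1) - Bm i ≠ 0 := by have := hC1m i h1 h2; linarith
    have hHval : -H i = Hm i := by linarith [hC2a i h1 (by omega)]
    rw [hHval, hHm i h1 (by omega)]
    field_simp
    ring
  have hf0 : Ap K + Bp K * H K = 0 := by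
    have : Bp K ≠ 0 := hC1pK.ne
    rw [hHK]
    field_simp
    ring
  have hg0 : Am 1 + Bm 1 * (-H 0) = 0 := by
    have : Bm 1 ≠ 0 := hC1m1.ne
    rw [hH0]
    field_simp
    ring
  -- exact piece identification on [H (i-1), H i]
  have hφp_at : ∀ i, 1 ≤ i → i ≤ K → ∀ z, H (i - 1) ≤ z → z ≤ H i →
      phiPL K Ap Bp z = Ap i + Bp i * z := by
    intro i h1 h2 z hz1 hz2
    have hup : ∀ l, 1 ≤ l → l ≤ i → Ap l + Bp l * z ≤ Ap i + Bp i * z := by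
      intro l hl1 hli
      refine step_le' (fun n => Ap n + Bp n * z) l i hli (fun m hm hmi => ?_)
      show Ap m + Bp m * z ≤ Ap (m + 1) + Bp (m + 1) * z
      have hm1 : 1 ≤ m := hl1.trans hm
      have hmK : m < K := by omega
      have hcr := hfcross m hm1 hmK
      have hBp := hC1p m hm1 hmK
      have hzm : H m ≤ z := le_trans (hHmono m (i - 1) (by omega) (by omega)) hz1
      nlinarith [mul_nonneg (show (0:ℝ) ≤ Bp (m + 1) - Bp m by linarith)
        (show (0:ℝ) ≤ z - H m by linarith)]
    have hdown : ∀ l, i ≤ l → l ≤ K → Ap l + Bp l * z ≤ Ap i + Bp i * z := by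
      intro l hil hlK
      refine step_ge' (fun n => Ap n + Bp n * z) i l hil (fun m hm hml => ?_)
      show Ap (m + 1) + Bp (m + 1) * z ≤ Ap m + Bp m * z
      have hm1 : 1 ≤ m := h1.trans hm
      have hmK : m < K := by omega
      have hcr := hfcross m hm1 hmK
      have hBp := hC1p m hm1 hmK
      have hzm : z ≤ H m := hz2.trans (hHmono i m hm hmK.le)
      nlinarith [mul_nonneg (show (0:ℝ) ≤ Bp (m + 1) - Bp m by linarith)
        (show (0:ℝ) ≤ H m - z by linarith)]
    have hnn : 0 ≤ Ap i + Bp i * z := by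
      have h1' := hdown K h2 le_rfl
      have hzK : z ≤ H K := hz2.trans (hHmono i K h2 le_rfl)
      nlinarith [mul_nonneg (show (0:ℝ) ≤ -Bp K by linarith)
        (show (0:ℝ) ≤ H K - z by linarith)]
    refine phiPL_eq' K Ap Bp z (Finset.mem_Icc.mpr ⟨h1, h2⟩) hnn ?_
    intro l hl
    rw [Finset.mem_Icc] at hl
    rcases le_or_gt l i with h | h
    · exact hup l hl.1 h
    · exact hdown l h.le hl.2
  have hφm_at : ∀ i, 1 ≤ i → i ≤ K → ∀ z, H (i - 1) ≤ z → z ≤ H i →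
      phiPL K Am Bm (-z) = Am i + Bm i * (-z) := by
    intro i h1 h2 z hz1 hz2
    have hup : ∀ l, 1 ≤ l → l ≤ i → Am l + Bm l * (-z) ≤ Am i + Bm i * (-z) := by
      intro l hl1 hli
      refine step_le' (fun n => Am n + Bm n * (-z)) l i hli (fun m hm hmi => ?_)
      show Am m + Bm m * (-z) ≤ Am (m + 1) + Bm (m + 1) * (-z)
      have hm1 : 1 ≤ m := hl1.trans hm
      have hmK : m < K := by omega
      have hcr := hgcross m hm1 hmK
      have hBm := hC1m m hm1 hmK
      have hzm : H m ≤ z := le_trans (hHmono m (i - 1) (by omega) (by omega)) hz1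
      nlinarith [mul_nonneg (show (0:ℝ) ≤ Bm m - Bm (m + 1) by linarith)
        (show (0:ℝ) ≤ z - H m by linarith)]
    have hdown : ∀ l, i ≤ l → l ≤ K → Am l + Bm l * (-z) ≤ Am i + Bm i * (-z) := by
      intro l hil hlK
      refine step_ge' (fun n => Am n + Bm n * (-z)) i l hil (fun m hm hml => ?_)
      show Am (m + 1) + Bm (m + 1) * (-z) ≤ Am m + Bm m * (-z)
      have hm1 : 1 ≤ m := h1.trans hm
      have hmK : m < K := by omega
      have hcr := hgcross m hm1 hmK
      have hBm := hC1m m hm1 hmK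
      have hzm : z ≤ H m := hz2.trans (hHmono i m hm hmK.le)
      nlinarith [mul_nonneg (show (0:ℝ) ≤ Bm m - Bm (m + 1) by linarith)
        (show (0:ℝ) ≤ H m - z by linarith)]
    have hnn : 0 ≤ Am i + Bm i * (-z) := by
      have h1' := hup 1 le_rfl h1
      have hz0 : H 0 ≤ z := le_trans (hHmono 0 (i - 1) (by omega) (by omega)) hz1
      nlinarith [mul_nonneg (show (0:ℝ) ≤ -Bm 1 by linarith)
        (show (0:ℝ) ≤ z - H 0 by linarith)]
    refine phiPL_eq' K Am Bm (-z) (Finset.mem_Icc.mpr ⟨h1, h2⟩) hnn ?_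
    intro l hl
    rw [Finset.mem_Icc] at hl
    rcases le_or_gt l i with h | h
    · exact hup l hl.1 h
    · exact hdown l h.le hl.2
  -- Q is exactly linear on each segment
  have hQseg : ∀ i, 1 ≤ i → i ≤ K → ∀ z w, H (i - 1) ≤ z → z ≤ H i → H (i - 1) ≤ w → w ≤ H i →
      Q w - Q z = (p * Bp i - (1 - p) * Bm i) * (w - z) := by
    intro i h1 h2 z w hz1 hz2 hw1 hw2
    have e1 := hφp_at i h1 h2 z hz1 hz2
    have e2 := hφm_at i h1 h2 z hz1 hz2
    have e3 := hφp_at i h1 h2 w hw1 hw2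
    have e4 := hφm_at i h1 h2 w hw1 hw2
    simp only [hQdef, condSurrRisk, e1, e2, e3, e4]
    ring
  -- locate t* p
  have hex : ∃ j, j ≤ K ∧ tst p = H j ∧ (j = K ∨ p ≤ pp (j + 1)) ∧
      (j = 0 ∨ (1 ≤ j ∧ pp j < p)) := by
    classical
    set j := Nat.findGreatest (fun i => pp i < p) K with hjdef
    have hjK' : j ≤ K := Nat.findGreatest_le K
    by_cases hj0 : j = 0
    · have h1 := Nat.findGreatest_is_greatest (P := fun i => pp i < p) (n := K) (k := 1)
        (by rw [← hjdef]; omega) hK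
      simp only [not_lt] at h1
      exact ⟨0, Nat.zero_le K, htst0 p h1, Or.inr (by simpa using h1), Or.inl rfl⟩
    · have hjp : pp j < p := Nat.findGreatest_of_ne_zero hjdef.symm hj0
      have hj1 : 1 ≤ j := by omega
      by_cases hjK : j = K
      · refine ⟨j, hjK', ?_, Or.inl hjK, Or.inr ⟨hj1, hjp⟩⟩
        rw [hjK]
        exact htstK p (by rwa [hjK] at hjp)
      · have hnp := Nat.findGreatest_is_greatest (P := fun i => pp i < p) (n := K) (k := j + 1)
          (by rw [← hjdef]; omega) (by omega)
        simp only [not_lt] at hnp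
        exact ⟨j, hjK', htstmid p j hj1 (by omega) hjp hnp, Or.inr hnp, Or.inr ⟨hj1, hjp⟩⟩
  obtain ⟨j, hjK, htstj, hjup, hjlow⟩ := hex
  have hδk := hδ k (Finset.mem_Icc.mpr ⟨hk1, hkK⟩)
  have hsum : Bm k + Bp k < 0 := hsumneg k hk1 hkK
  have hBmk : Bm k < 0 := hBmneg k hk1 hkK
  have hC3k := hC3' k hk1 hkK
  have hLk := hLrep' k hk1 hkK
  have hppkpos : 0 < pp k := lt_of_lt_of_le hpp0 (hppmono' 1 k le_rfl hk1 hkK)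
  rcases le_or_gt p (pp k) with hpk | hpk
  · -- p ≤ pp k : optimum is at H j with j < k
    have hjk : j < k := by
      rcases hjlow with rfl | ⟨hj1, hjp⟩
      · omega
      · by_contra hcon
        push_neg at hcon
        have := hppmono' k j hk1 hcon hjK
        linarith
    have hpj1 : p ≤ pp (j + 1) := by
      rcases hjup with rfl | h
      · exact absurd hjk (by omega)
      · exact h
    have hasc : Q (H j) ≤ Q (H (k - 1)) := by
      refine step_le' (fun n => Q (H n)) j (k - 1) (by omega) (fun i hi hik => ?_)
      show Q (H i) ≤ Q (H (i + 1))
      have h1 : 1 ≤ i + 1 := by omega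
      have h2 : i + 1 ≤ K := by omega
      have hH : H i ≤ H (i + 1) := hHmono i (i + 1) (by omega) h2
      have hseg := hQseg (i + 1) h1 h2 (H i) (H (i + 1)) (by rw [Nat.add_sub_cancel]) hH (by rw [Nat.add_sub_cancel]; exact hH) le_rfl
      have hLi : 0 ≤ p * Bp (i + 1) - (1 - p) * Bm (i + 1) := by
        rw [hLrep' (i + 1) h1 h2]
        have hple : p ≤ pp (i + 1) := hpj1.trans (hppmono' (j + 1) (i + 1) (by omega) (by omega) h2)
        have hs := hsumneg (i + 1) h1 h2
        nlinarith
      nlinarith [hseg, mul_nonneg hLi (sub_nonneg.mpr hH)]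
    have hseg := hQseg k hk1 hkK (H (k - 1)) (δ k) le_rfl (by linarith [hδk.1, hδk.2])
      hδk.1.le hδk.2.le
    have hL0 : 0 ≤ p * Bp k - (1 - p) * Bm k := by
      rw [hLk]
      nlinarith
    have hdrop : (p * Bp k - (1 - p) * Bm k) * (δ k - H (k - 1)) ≤ Q (δ k) - Q (tst p) := by
      rw [htstj]
      linarith [hseg, hasc]
    have habs : |δ k - H (k - 1)| = δ k - H (k - 1) := abs_of_pos (by linarith [hδk.1])
    have hcmem : -(pp k) / (Bm k * |δ k - H (k - 1)|) ≤ C :=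
      hC.2 ⟨k, Finset.mem_Icc.mpr ⟨hk1, hkK⟩, k - 1,
        Finset.mem_Icc.mpr ⟨Nat.zero_le _, by omega⟩, rfl⟩
    rw [habs] at hcmem
    have hcpos : 0 < -(pp k) / (Bm k * (δ k - H (k - 1))) :=
      div_pos_of_neg_of_neg (by linarith) (mul_neg_of_neg_of_pos hBmk (by linarith [hδk.1]))
    have hΔ0 : 0 ≤ Q (δ k) - Q (tst p) := by
      nlinarith [hdrop, mul_nonneg hL0 (show (0:ℝ) ≤ δ k - H (k - 1) by linarith [hδk.1])]
    have hkey : (-(pp k) / (Bm k * (δ k - H (k - 1)))) *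
        ((p * Bp k - (1 - p) * Bm k) * (δ k - H (k - 1))) = pp k - p := by
      have hBne : Bm k ≠ 0 := hBmk.ne
      have hrne : δ k - H (k - 1) ≠ 0 := sub_ne_zero.mpr hδk.1.ne'
      rw [hLk]
      field_simp
      linear_combination (pp k - p) * hC3k
    have habs2 : |p - pp k| = pp k - p := by
      rw [abs_of_nonpos (by linarith)]
      ring
    rw [habs2, ← hkey]
    have step1 := mul_le_mul_of_nonneg_left hdrop hcpos.le
    have step2 := mul_le_mul_of_nonneg_right hcmem hΔ0
    linarith [step1, step2]
  · -- pp k < p : optimum is at H j with k ≤ j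
    have hjge : k ≤ j := by
      rcases hjup with rfl | h
      · exact hkK
      · by_contra hcon
        push_neg at hcon
        have := hppmono' (j + 1) k (by omega) (by omega) hkK
        linarith
    have hjp : pp j < p := by
      rcases hjlow with rfl | ⟨_, h⟩
      · exact absurd hjge (by omega)
      · exact h
    have hdesc : Q (H j) ≤ Q (H k) := by
      refine step_ge' (fun n => Q (H n)) k j hjge (fun i hi hik => ?_)
      show Q (H (i + 1)) ≤ Q (H i)
      have h1 : 1 ≤ i + 1 := by omega
      have h2 : i + 1 ≤ K := by omega
      have hH : H i ≤ H (i + 1) := hHmono i (i + 1) (by omega) h2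
      have hseg := hQseg (i + 1) h1 h2 (H (i + 1)) (H i) (by rw [Nat.add_sub_cancel]; exact hH) le_rfl (by rw [Nat.add_sub_cancel]) hH
      have hLi : p * Bp (i + 1) - (1 - p) * Bm (i + 1) ≤ 0 := by
        rw [hLrep' (i + 1) h1 h2]
        have hple : pp (i + 1) ≤ pp j := hppmono' (i + 1) j (by omega) (by omega) hjK
        have hs := hsumneg (i + 1) h1 h2
        nlinarith
      nlinarith [hseg, mul_nonneg (neg_nonneg.mpr hLi) (sub_nonneg.mpr hH)]
    have hseg := hQseg k hk1 hkK (H k) (δ k) (by linarith [hδk.1, hδk.2]) le_rfl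
      hδk.1.le hδk.2.le
    have hL0 : p * Bp k - (1 - p) * Bm k ≤ 0 := by
      rw [hLk]
      nlinarith
    have hdrop : (p * Bp k - (1 - p) * Bm k) * (δ k - H k) ≤ Q (δ k) - Q (tst p) := by
      rw [htstj]
      linarith [hseg, hdesc]
    have habs : |δ k - H k| = H k - δ k := by
      rw [abs_of_neg (show δ k - H k < 0 by linarith [hδk.2])]
      ring
    have hcmem : -(pp k) / (Bm k * |δ k - H k|) ≤ C :=
      hC.2 ⟨k, Finset.mem_Icc.mpr ⟨hk1, hkK⟩, k,
        Finset.mem_Icc.mpr ⟨Nat.zero_le _, hkK⟩, rfl⟩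
    rw [habs] at hcmem
    have hcpos : 0 < -(pp k) / (Bm k * (H k - δ k)) :=
      div_pos_of_neg_of_neg (by linarith) (mul_neg_of_neg_of_pos hBmk (by linarith [hδk.2]))
    have hΔ0 : 0 ≤ Q (δ k) - Q (tst p) := by
      nlinarith [hdrop, mul_nonneg (neg_nonneg.mpr hL0)
        (show (0:ℝ) ≤ H k - δ k by linarith [hδk.2])]
    have hkey : (-(pp k) / (Bm k * (H k - δ k))) *
        ((p * Bp k - (1 - p) * Bm k) * (δ k - H k)) = p - pp k := by
      have hBne : Bm k ≠ 0 := hBmk.ne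
      have hrne : H k - δ k ≠ 0 := sub_ne_zero.mpr hδk.2.ne'
      rw [hLk]
      field_simp
      linear_combination (H k - δ k) * hC3k
    have habs2 : |p - pp k| = p - pp k := abs_of_pos (by linarith)
    rw [habs2, ← hkey]
    have step1 := mul_le_mul_of_nonneg_left hdrop hcpos.le
    have step2 := mul_le_mul_of_nonneg_right hcmem hΔ0
    linarith [step1, step2]
end

section
/- Suppose conditions (C1)–(C3) hold for the piecewise linear surrogates φ⁺, φ⁻. Set L = max{−B⁺_1, −B⁻_K} (the common Lipschitz constant of φ⁺ and φ⁻) and M = max{|H_0|, |H_K|}. Then for every B > 0, every p ∈ [0,1], and every t ∈ ℝ with |t| ≤ B: p·(φ⁺(t) − φ⁺(t*_p))² + (1−p)·(φ⁻(−t) − φ⁻(−t*_p))² ≤ L²·(B + M)·ρ_p(t). -/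
lemma fold_max_nonneg (s : Finset ℕ) (f : ℕ → ℝ) : 0 ≤ s.fold max 0 f := by
  induction s using Finset.induction_on with
  | empty => simp
  | insert _ _ hx ih =>
    rw [Finset.fold_insert hx]
    exact le_trans ih (le_max_right _ _)

lemma fold_max_nonpos (s : Finset ℕ) (f : ℕ → ℝ) (h : ∀ i ∈ s, f i ≤ 0) :
    s.fold max 0 f ≤ 0 := by
  induction s using Finset.induction_on with
  | empty => simp
  | insert _ _ hx ih =>
    rw [Finset.fold_insert hx]
    exact max_le (h _ (Finset.mem_insert_self _ _))
      (ih fun i hi => h i (Finset.mem_insert_of_mem hi))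

lemma fold_max_abs_sub (s : Finset ℕ) (f g : ℕ → ℝ) (C : ℝ) (hC : 0 ≤ C)
    (h : ∀ i ∈ s, |f i - g i| ≤ C) :
    |s.fold max 0 f - s.fold max 0 g| ≤ C := by
  induction s using Finset.induction_on with
  | empty => simpa
  | insert _ _ hx ih =>
    rw [Finset.fold_insert hx, Finset.fold_insert hx]
    exact (abs_max_sub_max_le_max _ _ _ _).trans
      (max_le (h _ (Finset.mem_insert_self _ _))
        (ih fun i hi => h i (Finset.mem_insert_of_mem hi)))

/-- Pseudo-distance `ρ_p(t)`: `p·|t − t*_p|` if `p < π_1` and `t < H_0`;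
`(1−p)·|t − t*_p|` if `p > π_K` and `t > H_K`; `|t − t*_p|` otherwise. -/
noncomputable def rhoPL (K : ℕ) (pp : ℕ → ℝ) (H : ℕ → ℝ) (tst : ℝ → ℝ) (p t : ℝ) : ℝ :=
  if p < pp 1 ∧ t < H 0 then p * |t - tst p|
  else if pp K < p ∧ H K < t then (1 - p) * |t - tst p|
  else |t - tst p|

/-- Second-moment bound for the excess losses of a minimally consistent piecewise linear
surrogate: with `L = max{−B⁺_1, −B⁻_K}` and `M = max{|H_0|, |H_K|}`, for every `B > 0`,
`p ∈ [0,1]` and `|t| ≤ B`,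
`p·(φ⁺(t) − φ⁺(t*_p))² + (1−p)·(φ⁻(−t) − φ⁻(−t*_p))² ≤ L²·(B + M)·ρ_p(t)`. -/
theorem stmt_14 (K : ℕ) (hK : 1 ≤ K) (pp : ℕ → ℝ)
    (hpp0 : 0 < pp 1) (hppK : pp K < 1)
    (hppmono : ∀ k, 1 ≤ k → k < K → pp k < pp (k + 1))
    (Ap Bp Am Bm : ℕ → ℝ) (H Hm : ℕ → ℝ)
    (hH0 : H 0 = Am 1 / Bm 1)
    (hHmid : ∀ k, 1 ≤ k → k ≤ K - 1 → H k = (Ap k - Ap (k + 1)) / (Bp (k + 1) - Bp k))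
    (hHK : H K = -Ap K / Bp K)
    (hHm : ∀ k, 1 ≤ k → k ≤ K - 1 → Hm k = (Am k - Am (k + 1)) / (Bm (k + 1) - Bm k))
    (hC1p : ∀ k, 1 ≤ k → k < K → Bp k < Bp (k + 1)) (hC1pK : Bp K < 0)
    (hC1m : ∀ k, 1 ≤ k → k < K → Bm (k + 1) < Bm k) (hC1m1 : Bm 1 < 0)
    (hC2a : ∀ k, 1 ≤ k → k ≤ K - 1 → -Hm k = H k)
    (hC2b : ∀ k, k < K → H k < H (k + 1))
    (hC3 : ∀ k ∈ Finset.Icc 1 K, Bm k / (Bm k + Bp k) = pp k)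
    -- pointwise surrogate-optimal value
    (tst : ℝ → ℝ)
    (htst0 : ∀ p : ℝ, p ≤ pp 1 → tst p = H 0)
    (htstmid : ∀ p : ℝ, ∀ k, 1 ≤ k → k ≤ K - 1 → pp k < p → p ≤ pp (k + 1) → tst p = H k)
    (htstK : ∀ p : ℝ, pp K < p → tst p = H K)
    (L M : ℝ) (hL : L = max (-Bp 1) (-Bm K)) (hM : M = max |H 0| |H K|) :
    ∀ B : ℝ, 0 < B → ∀ p : ℝ, 0 ≤ p → p ≤ 1 → ∀ t : ℝ, |t| ≤ B →
      p * (phiPL K Ap Bp t - phiPL K Ap Bp (tst p)) ^ 2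
        + (1 - p) * (phiPL K Am Bm (-t) - phiPL K Am Bm (-(tst p))) ^ 2
      ≤ L ^ 2 * (B + M) * rhoPL K pp H tst p t := by
  intro B hB p hp0 hp1 t htB
  -- monotonicity chains
  have chainP : ∀ i j : ℕ, 1 ≤ i → i ≤ j → j ≤ K → Bp i ≤ Bp j := by
    intro i j h1 hij
    induction j, hij using Nat.le_induction with
    | base => intro _; exact le_rfl
    | succ m hm ih =>
      intro hmK
      exact le_trans (ih (by omega)) (le_of_lt (hC1p m (by omega) (by omega)))
  have chainM : ∀ i j : ℕ, 1 ≤ i → i ≤ j → j ≤ K → Bm j ≤ Bm i := by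
    intro i j h1 hij
    induction j, hij using Nat.le_induction with
    | base => intro _; exact le_rfl
    | succ m hm ih =>
      intro hmK
      exact le_trans (le_of_lt (hC1m m (by omega) (by omega))) (ih (by omega))
  have chainH : ∀ i j : ℕ, i ≤ j → j ≤ K → H i ≤ H j := by
    intro i j hij
    induction j, hij using Nat.le_induction with
    | base => intro _; exact le_rfl
    | succ m hm ih =>
      intro hmK
      exact le_trans (ih (by omega)) (le_of_lt (hC2b m (by omega)))
  have hBpK : Bp K < 0 := hC1pK
  have hBmK : Bm K < 0 := lt_of_le_of_lt (chainM 1 K le_rfl hK le_rfl) hC1m1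
  have hLpos : 0 < L := lt_of_lt_of_le (by linarith) (hL ▸ le_max_right _ _)
  have hBp1L : -Bp 1 ≤ L := hL ▸ le_max_left _ _
  have hBmKL : -Bm K ≤ L := hL ▸ le_max_right _ _
  have hM0 : 0 ≤ M := le_trans (abs_nonneg _) (hM ▸ le_max_left _ _)
  -- line comparison for φ⁺
  have lineP : ∀ n k : ℕ, 1 ≤ k → k + n = K → ∀ x : ℝ, H K ≤ x →
      Ap k + Bp k * x ≤ Ap K + Bp K * x := by
    intro n
    induction n with
    | zero =>
      intro k _ hk x _
      have : k = K := by omega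
      subst this; exact le_rfl
    | succ n ih =>
      intro k h1 hk x hx
      have hkK : k < K := by omega
      have hB : Bp k < Bp (k + 1) := hC1p k h1 hkK
      have hne : Bp (k + 1) - Bp k ≠ 0 := by linarith
      have key : (Bp (k + 1) - Bp k) * H k = Ap k - Ap (k + 1) := by
        rw [hHmid k h1 (by omega)]; field_simp
      have hHkx : H k ≤ x := le_trans (chainH k K (by omega) le_rfl) hx
      have hnn : 0 ≤ (Bp (k + 1) - Bp k) * (x - H k) :=
        mul_nonneg (by linarith) (by linarith)
      have step : Ap k + Bp k * x ≤ Ap (k + 1) + Bp (k + 1) * x := by nlinarith [key, hnn]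
      exact le_trans step (ih (k + 1) (by omega) (by omega) x hx)
  -- line comparison for φ⁻
  have lineM : ∀ k : ℕ, 1 ≤ k → k ≤ K → ∀ z : ℝ, -H 0 ≤ z →
      Am k + Bm k * z ≤ Am 1 + Bm 1 * z := by
    intro k
    induction k with
    | zero => omega
    | succ k ih =>
      intro _ hkK z hz
      rcases Nat.eq_zero_or_pos k with hk0 | hk1
      · subst hk0; exact le_rfl
      · have hkK' : k < K := by omega
        have hB : Bm (k + 1) < Bm k := hC1m k hk1 hkK'
        have hne : Bm (k + 1) - Bm k ≠ 0 := by linarith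
        have key : (Bm (k + 1) - Bm k) * Hm k = Am k - Am (k + 1) := by
          rw [hHm k hk1 (by omega)]; field_simp
        have hHmk : Hm k = -H k := by
          have := hC2a k hk1 (by omega); linarith
        have hH0k : H 0 ≤ H k := chainH 0 k (by omega) (by omega)
        have hnp : (Bm (k + 1) - Bm k) * (z - Hm k) ≤ 0 := by
          apply mul_nonpos_of_nonpos_of_nonneg (by linarith)
          rw [hHmk]; linarith
        have step : Am (k + 1) + Bm (k + 1) * z ≤ Am k + Bm k * z := by
          nlinarith [key, hnp]
        exact le_trans step (ih hk1 (by omega) z hz)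
  -- vanishing of φ⁺ to the right of H K
  have phiP_zero : ∀ x : ℝ, H K ≤ x → phiPL K Ap Bp x = 0 := by
    intro x hx
    refine le_antisymm (fold_max_nonpos _ _ ?_) (fold_max_nonneg _ _)
    intro k hk
    rw [Finset.mem_Icc] at hk
    have h1 : Ap k + Bp k * x ≤ Ap K + Bp K * x := lineP (K - k) k hk.1 (by omega) x hx
    have keyK : Bp K * H K = -Ap K := by
      have hne : Bp K ≠ 0 := ne_of_lt hBpK
      rw [hHK]; field_simp
    nlinarith [mul_nonneg (le_of_lt (by linarith : (0:ℝ) < -Bp K)) (by linarith : (0:ℝ) ≤ x - H K)]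
  -- vanishing of φ⁻ to the right of -H 0
  have phiM_zero : ∀ z : ℝ, -H 0 ≤ z → phiPL K Am Bm z = 0 := by
    intro z hz
    refine le_antisymm (fold_max_nonpos _ _ ?_) (fold_max_nonneg _ _)
    intro k hk
    rw [Finset.mem_Icc] at hk
    have h1 : Am k + Bm k * z ≤ Am 1 + Bm 1 * z := lineM k hk.1 hk.2 z hz
    have key0 : Bm 1 * H 0 = Am 1 := by
      have hne : Bm 1 ≠ 0 := ne_of_lt hC1m1
      rw [hH0]; field_simp
    nlinarith [mul_nonneg (le_of_lt (by linarith : (0:ℝ) < -Bm 1)) (by linarith : (0:ℝ) ≤ z + H 0)]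
  -- Lipschitz bounds
  have lipP : ∀ x y : ℝ, |phiPL K Ap Bp x - phiPL K Ap Bp y| ≤ L * |x - y| := by
    intro x y
    apply fold_max_abs_sub _ _ _ _ (mul_nonneg hLpos.le (abs_nonneg _))
    intro k hk
    rw [Finset.mem_Icc] at hk
    have h1 : Bp 1 ≤ Bp k := chainP 1 k le_rfl hk.1 hk.2
    have h2 : Bp k < 0 := lt_of_le_of_lt (chainP k K hk.1 hk.2 le_rfl) hBpK
    have : (Ap k + Bp k * x) - (Ap k + Bp k * y) = Bp k * (x - y) := by ring
    rw [this, abs_mul]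
    apply mul_le_mul_of_nonneg_right _ (abs_nonneg _)
    rw [abs_of_neg h2]; linarith
  have lipM : ∀ x y : ℝ, |phiPL K Am Bm x - phiPL K Am Bm y| ≤ L * |x - y| := by
    intro x y
    apply fold_max_abs_sub _ _ _ _ (mul_nonneg hLpos.le (abs_nonneg _))
    intro k hk
    rw [Finset.mem_Icc] at hk
    have h1 : Bm K ≤ Bm k := chainM k K hk.1 hk.2 le_rfl
    have h2 : Bm k < 0 := lt_of_le_of_lt (chainM 1 k le_rfl hk.1 hk.2) hC1m1
    have : (Am k + Bm k * x) - (Am k + Bm k * y) = Bm k * (x - y) := by ring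
    rw [this, abs_mul]
    apply mul_le_mul_of_nonneg_right _ (abs_nonneg _)
    rw [abs_of_neg h2]; linarith
  -- tst p is one of the H k
  have htstmem : ∃ k : ℕ, k ≤ K ∧ tst p = H k := by
    by_cases h1 : p ≤ pp 1
    · exact ⟨0, by omega, htst0 p h1⟩
    by_cases h2 : pp K < p
    · exact ⟨K, le_rfl, htstK p h2⟩
    push_neg at h1 h2
    have find : ∀ n j : ℕ, 1 ≤ j → j + n = K → pp j < p →
        ∃ k, 1 ≤ k ∧ k ≤ K - 1 ∧ pp k < p ∧ p ≤ pp (k + 1) := by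
      intro n
      induction n with
      | zero =>
        intro j _ hj hpj
        exfalso
        have : j = K := by omega
        subst this; linarith
      | succ n ih =>
        intro j hj1 hj hpj
        by_cases hc : p ≤ pp (j + 1)
        · exact ⟨j, hj1, by omega, hpj, hc⟩
        · push_neg at hc
          exact ih (j + 1) (by omega) (by omega) hc
    obtain ⟨k, hk1, hk2, ha, hb⟩ := find (K - 1) 1 le_rfl (by omega) h1
    exact ⟨k, by omega, htstmid p k hk1 hk2 ha hb⟩
  have htstM : |tst p| ≤ M := by
    obtain ⟨k, hkK, hk⟩ := htstmem
    rw [hk, hM, abs_le]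
    constructor
    · have := chainH 0 k (by omega) hkK
      have h0 : -|H 0| ≤ H 0 := neg_abs_le _
      have := le_max_left |H 0| |H K|
      linarith
    · have := chainH k K hkK le_rfl
      have h0 : H K ≤ |H K| := le_abs_self _
      have := le_max_right |H 0| |H K|
      linarith
  -- core quadratic bounds
  have hDBM : |t - tst p| ≤ B + M := by
    calc |t - tst p| ≤ |t| + |tst p| := abs_sub _ _
    _ ≤ B + M := add_le_add htB htstM
  have hDnn : (0:ℝ) ≤ |t - tst p| := abs_nonneg _
  have hXb : (phiPL K Ap Bp t - phiPL K Ap Bp (tst p)) ^ 2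
      ≤ L ^ 2 * (B + M) * |t - tst p| := by
    have h := lipP t (tst p)
    have h2 : (phiPL K Ap Bp t - phiPL K Ap Bp (tst p)) ^ 2 ≤ (L * |t - tst p|) ^ 2 := by
      rw [← sq_abs]
      exact pow_le_pow_left₀ (abs_nonneg _) h 2
    calc (phiPL K Ap Bp t - phiPL K Ap Bp (tst p)) ^ 2
        ≤ (L * |t - tst p|) ^ 2 := h2
      _ = (L ^ 2 * |t - tst p|) * |t - tst p| := by ring
      _ ≤ (L ^ 2 * |t - tst p|) * (B + M) :=
          mul_le_mul_of_nonneg_left hDBM (mul_nonneg (sq_nonneg L) hDnn)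
      _ = L ^ 2 * (B + M) * |t - tst p| := by ring
  have hYb : (phiPL K Am Bm (-t) - phiPL K Am Bm (-(tst p))) ^ 2
      ≤ L ^ 2 * (B + M) * |t - tst p| := by
    have h := lipM (-t) (-(tst p))
    have he : |(-t) - (-(tst p))| = |t - tst p| := by
      rw [show (-t) - (-(tst p)) = -(t - tst p) by ring, abs_neg]
    rw [he] at h
    have h2 : (phiPL K Am Bm (-t) - phiPL K Am Bm (-(tst p))) ^ 2 ≤ (L * |t - tst p|) ^ 2 := by
      rw [← sq_abs]
      exact pow_le_pow_left₀ (abs_nonneg _) h 2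
    calc (phiPL K Am Bm (-t) - phiPL K Am Bm (-(tst p))) ^ 2
        ≤ (L * |t - tst p|) ^ 2 := h2
      _ = (L ^ 2 * |t - tst p|) * |t - tst p| := by ring
      _ ≤ (L ^ 2 * |t - tst p|) * (B + M) :=
          mul_le_mul_of_nonneg_left hDBM (mul_nonneg (sq_nonneg L) hDnn)
      _ = L ^ 2 * (B + M) * |t - tst p| := by ring
  -- case analysis on rhoPL
  rw [rhoPL]
  split_ifs with h1 h2
  · -- p < pp 1 and t < H 0 : minus part vanishes
    obtain ⟨hpA, htA⟩ := h1
    have hts : tst p = H 0 := htst0 p hpA.le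
    have hY0 : phiPL K Am Bm (-t) - phiPL K Am Bm (-(tst p)) = 0 := by
      rw [hts, phiM_zero (-t) (by linarith), phiM_zero (-(H 0)) le_rfl, sub_self]
    rw [hY0]
    have h3 := mul_le_mul_of_nonneg_left hXb hp0
    calc p * (phiPL K Ap Bp t - phiPL K Ap Bp (tst p)) ^ 2 + (1 - p) * 0 ^ 2
        = p * (phiPL K Ap Bp t - phiPL K Ap Bp (tst p)) ^ 2 := by ring
      _ ≤ p * (L ^ 2 * (B + M) * |t - tst p|) := h3
      _ = L ^ 2 * (B + M) * (p * |t - tst p|) := by ring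
  · -- pp K < p and H K < t : plus part vanishes
    obtain ⟨hpA, htA⟩ := h2
    have hts : tst p = H K := htstK p hpA
    have hX0 : phiPL K Ap Bp t - phiPL K Ap Bp (tst p) = 0 := by
      rw [hts, phiP_zero t htA.le, phiP_zero (H K) le_rfl, sub_self]
    rw [hX0]
    have h3 := mul_le_mul_of_nonneg_left hYb (by linarith : (0:ℝ) ≤ 1 - p)
    calc p * 0 ^ 2 + (1 - p) * (phiPL K Am Bm (-t) - phiPL K Am Bm (-(tst p))) ^ 2
        = (1 - p) * (phiPL K Am Bm (-t) - phiPL K Am Bm (-(tst p))) ^ 2 := by ring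
      _ ≤ (1 - p) * (L ^ 2 * (B + M) * |t - tst p|) := h3
      _ = L ^ 2 * (B + M) * ((1 - p) * |t - tst p|) := by ring
  · have h3 := mul_le_mul_of_nonneg_left hXb hp0
    have h4 := mul_le_mul_of_nonneg_left hYb (by linarith : (0:ℝ) ≤ 1 - p)
    calc p * (phiPL K Ap Bp t - phiPL K Ap Bp (tst p)) ^ 2
          + (1 - p) * (phiPL K Am Bm (-t) - phiPL K Am Bm (-(tst p))) ^ 2
        ≤ p * (L ^ 2 * (B + M) * |t - tst p|)
          + (1 - p) * (L ^ 2 * (B + M) * |t - tst p|) := add_le_add h3 h4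
      _ = L ^ 2 * (B + M) * |t - tst p| := by ring
end
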